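/- arXiv:solv-int/9501006 — 2 statements merged into one kernel-verified Lean document; each statement's English description precedes it below -/
import Mathlib

section
/- If a convex closed curve γ₁ lies completely inside a convex closed curve γ₂ in the Euclidean plane, then the perimeter (length) of γ₁ is strictly less than the perimeter of γ₂ (assuming γ₁ ≠ γ₂). -/
open MeasureTheory Set Metric
open scoped ENNReal

namespace PerimAux

/-- The real-linear coordinate `z ↦ (z * conj w).re` is 1-Lipschitz when `|w| ≤ 1`. -/
lemma lip_re_mul (w : ℂ) (hw : ‖w‖ ≤ 1) :
    LipschitzWith 1 (fun z : ℂ => (z * (starRingEnd ℂ) w).re) := by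
  refine LipschitzWith.of_dist_le_mul fun z₁ z₂ => ?_
  have : (z₁ * (starRingEnd ℂ) w).re - (z₂ * (starRingEnd ℂ) w).re
      = ((z₁ - z₂) * (starRingEnd ℂ) w).re := by
    rw [sub_mul, Complex.sub_re]
  rw [Real.dist_eq, this]
  calc |((z₁ - z₂) * (starRingEnd ℂ) w).re| ≤ ‖(z₁ - z₂) * (starRingEnd ℂ) w‖ :=
        Complex.abs_re_le_norm _
    _ = ‖z₁ - z₂‖ * ‖w‖ := by
        rw [norm_mul, Complex.norm_conj]
    _ ≤ ‖z₁ - z₂‖ * 1 := by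
        exact mul_le_mul_of_nonneg_left hw (norm_nonneg _)
    _ = 1 * dist z₁ z₂ := by rw [Complex.dist_eq]; ring

/-- Key lower bound: a preconnected set `T` has `μH¹ T` at least the oscillation of a
1-Lipschitz linear coordinate between two points of its closure. -/
lemma gbound (T : Set ℂ) (hT : IsPreconnected T) (w p q : ℂ) (hw : ‖w‖ ≤ 1)
    (hp : p ∈ closure T) (hq : q ∈ closure T) :
    ENNReal.ofReal (((q - p) * (starRingEnd ℂ) w).re) ≤ μH[1] T := by
  set ψ : ℂ → ℝ := fun z => (z * (starRingEnd ℂ) w).re with hψdef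
  have hψ : LipschitzWith 1 ψ := lip_re_mul w hw
  have hval : ((q - p) * (starRingEnd ℂ) w).re = ψ q - ψ p := by
    simp only [hψdef, sub_mul, Complex.sub_re]
  rw [hval]
  rcases le_or_gt (ψ q - ψ p) 0 with hle | hpos
  · simp [ENNReal.ofReal_eq_zero.mpr hle]
  -- the image contains the open interval (ψ p, ψ q)
  have himg : Ioo (ψ p) (ψ q) ⊆ ψ '' T := by
    intro t ht
    have hpc : ψ p ∈ closure (ψ '' T) :=
      (image_closure_subset_closure_image hψ.continuous) (mem_image_of_mem ψ hp)
    have hqc : ψ q ∈ closure (ψ '' T) :=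
      (image_closure_subset_closure_image hψ.continuous) (mem_image_of_mem ψ hq)
    obtain ⟨a, haT, ha⟩ := Metric.mem_closure_iff.1 hpc (t - ψ p) (by linarith [ht.1])
    obtain ⟨b, hbT, hb⟩ := Metric.mem_closure_iff.1 hqc (ψ q - t) (by linarith [ht.2])
    rw [Real.dist_eq] at ha hb
    have ha2 := abs_lt.1 ha
    have hb2 := abs_lt.1 hb
    have ha' : a < t := by linarith [ha2.1, ha2.2]
    have hb' : t < b := by linarith [hb2.1, hb2.2]
    exact (hT.image ψ hψ.continuous.continuousOn).Icc_subset haT hbT ⟨ha'.le, hb'.le⟩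
  calc ENNReal.ofReal (ψ q - ψ p) = μH[1] (Ioo (ψ p) (ψ q)) := by
        rw [MeasureTheory.hausdorffMeasure_real, Real.volume_Ioo]
    _ ≤ μH[1] (ψ '' T) := measure_mono himg
    _ ≤ μH[1] T := by simpa using hψ.hausdorffMeasure_image_le zero_le_one T

/-- A closed convex set with nonempty interior is the closure of its interior. -/
lemma subset_closure_interior {K : Set ℂ} (hc : Convex ℝ K) (hne : (interior K).Nonempty) :
    K ⊆ closure (interior K) := by
  obtain ⟨z, hz⟩ := hne
  intro k hk
  rw [Metric.mem_closure_iff]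
  intro ε hε
  set a : ℝ := min 1 (ε / (‖z - k‖ + 1)) / 2 with ha_def
  have hden : (0:ℝ) < ‖z - k‖ + 1 := by positivity
  have ha0 : 0 < a := by
    apply half_pos
    exact lt_min one_pos (div_pos hε hden)
  have ha1 : a ≤ 1/2 := by
    have := min_le_left (1:ℝ) (ε / (‖z - k‖ + 1))
    simp only [ha_def]
    linarith
  have hmem : a • z + (1 - a) • k ∈ interior K :=
    hc.combo_interior_closure_mem_interior hz (subset_closure hk) ha0 (by linarith) (by ring)
  refine ⟨a • z + (1 - a) • k, hmem, ?_⟩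
  have : k - (a • z + (1 - a) • k) = a • (k - z) := by
    rw [smul_sub]; module
  rw [dist_eq_norm, this, norm_smul, Real.norm_eq_abs, abs_of_pos ha0]
  have h2 : a ≤ ε / (‖z - k‖ + 1) / 2 := by
    have := min_le_right (1:ℝ) (ε / (‖z - k‖ + 1))
    simp only [ha_def]
    linarith
  have h3 : ‖k - z‖ = ‖z - k‖ := by rw [norm_sub_rev]
  have h4 : ‖k - z‖ ≤ ‖z - k‖ + 1 := by rw [h3]; linarith
  have h5 : (0:ℝ) ≤ ε / (‖z - k‖ + 1) / 2 := by positivity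
  have h6 : a * ‖k - z‖ ≤ (ε / (‖z - k‖ + 1) / 2) * (‖z - k‖ + 1) :=
    mul_le_mul h2 h4 (norm_nonneg _) h5
  have h7 : (ε / (‖z - k‖ + 1) / 2) * (‖z - k‖ + 1) = ε / 2 := by
    field_simp
  linarith

lemma subset_of_interior_subset {K D : Set ℂ} (hc : Convex ℝ K) (hne : (interior K).Nonempty)
    (hD : IsClosed D) (h : interior K ⊆ D) : K ⊆ D := fun k hk => by
  have h1 := subset_closure_interior hc hne hk
  have h2 : closure (interior K) ⊆ closure D := closure_mono h
  have h3 := h2 h1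
  rwa [hD.closure_eq] at h3

/-- Existence of the nearest-point projection onto a nonempty compact convex set,
with its variational characterization. -/
lemma exists_proj {K : Set ℂ} (hne : K.Nonempty) (hcpt : IsCompact K) (hcv : Convex ℝ K)
    (z : ℂ) : ∃ p ∈ K, ∀ w ∈ K, (inner ℝ (z - p) (w - p) : ℝ) ≤ 0 := by
  obtain ⟨p, hp, heq⟩ := exists_norm_eq_iInf_of_complete_convex hne
    (hcpt.isClosed.isComplete) hcv z
  exact ⟨p, hp, (norm_eq_iInf_iff_real_inner_le_zero hcv hp).mp heq⟩

/-- Variational inequality implies the projection is 1-Lipschitz (and unique). -/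
lemma var_lip {K : Set ℂ} {z₁ z₂ p₁ p₂ : ℂ} (hp₁ : p₁ ∈ K) (hp₂ : p₂ ∈ K)
    (h₁ : ∀ w ∈ K, (inner ℝ (z₁ - p₁) (w - p₁) : ℝ) ≤ 0)
    (h₂ : ∀ w ∈ K, (inner ℝ (z₂ - p₂) (w - p₂) : ℝ) ≤ 0) :
    dist p₁ p₂ ≤ dist z₁ z₂ := by
  have A := h₁ p₂ hp₂
  have B := h₂ p₁ hp₁
  have hexp : (inner ℝ (z₁ - z₂) (p₁ - p₂) : ℝ)
      = inner ℝ (z₁ - p₁) (p₁ - p₂) + inner ℝ (p₁ - p₂) (p₁ - p₂) + inner ℝ (p₂ - z₂) (p₁ - p₂) := by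
    rw [← inner_add_left, ← inner_add_left]
    congr 1
    abel
  have hA' : (inner ℝ (z₁ - p₁) (p₁ - p₂) : ℝ) ≥ 0 := by
    have : (inner ℝ (z₁ - p₁) (p₂ - p₁) : ℝ) = -(inner ℝ (z₁ - p₁) (p₁ - p₂) : ℝ) := by
      rw [show p₂ - p₁ = -(p₁ - p₂) by abel, inner_neg_right]
    linarith [A, this ▸ A]
  have hB' : (inner ℝ (p₂ - z₂) (p₁ - p₂) : ℝ) ≥ 0 := by
    have : (inner ℝ (p₂ - z₂) (p₁ - p₂) : ℝ) = -(inner ℝ (z₂ - p₂) (p₁ - p₂) : ℝ) := by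
      rw [show p₂ - z₂ = -(z₂ - p₂) by abel, inner_neg_left]
    linarith [B, this]
  have hkey : ‖p₁ - p₂‖ ^ 2 ≤ (inner ℝ (z₁ - z₂) (p₁ - p₂) : ℝ) := by
    rw [hexp, real_inner_self_eq_norm_sq]
    linarith
  have hcs : (inner ℝ (z₁ - z₂) (p₁ - p₂) : ℝ) ≤ ‖z₁ - z₂‖ * ‖p₁ - p₂‖ := real_inner_le_norm _ _
  rw [dist_eq_norm, dist_eq_norm]
  rcases eq_or_lt_of_le (norm_nonneg (p₁ - p₂)) with h0 | h0
  · rw [← h0]; exact norm_nonneg _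
  · nlinarith

/-- At a frontier point of a convex body there is a nonzero outward vector. -/
lemma exists_support {K : Set ℂ} (hcv : Convex ℝ K) (hcl : IsClosed K)
    (hne : (interior K).Nonempty) {x : ℂ} (hx : x ∈ frontier K) :
    ∃ v : ℂ, v ≠ 0 ∧ ∀ w ∈ K, (inner ℝ v (w - x) : ℝ) ≤ 0 := by
  have hxint : x ∉ interior K := by
    rw [hcl.frontier_eq] at hx; exact hx.2
  obtain ⟨f, hf⟩ := geometric_hahn_banach_open_point (hcv.interior) isOpen_interior hxint
  set v : ℂ := (f 1 : ℝ) + (f Complex.I : ℝ) * Complex.I with hv_def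
  have hfv : ∀ z : ℂ, (inner ℝ v z : ℝ) = f z := by
    intro z
    have hz : z = (z.re : ℂ) + (z.im : ℂ) * Complex.I := (Complex.re_add_im z).symm
    have hfz : f z = z.re * f 1 + z.im * f Complex.I := by
      conv_lhs => rw [hz]
      rw [map_add]
      have e1 : (z.re : ℂ) = z.re • (1:ℂ) := by simp [Complex.real_smul]
      have e2 : (z.im : ℂ) * Complex.I = z.im • Complex.I := by simp [Complex.real_smul]
      rw [e1, e2, f.map_smul, f.map_smul]
      simp [smul_eq_mul]
    have hinner : (inner ℝ v z : ℝ) = v.re * z.re + v.im * z.im := by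
      rw [Complex.inner, Complex.mul_re, Complex.conj_re, Complex.conj_im]
      ring
    rw [hinner, hfz]
    simp [hv_def]
    ring
  have hvne : v ≠ 0 := by
    obtain ⟨a, ha⟩ := hne
    intro h0
    have h1 : f a < f x := hf a ha
    have h2 : (inner ℝ v a : ℝ) = f a := hfv a
    have h3 : (inner ℝ v x : ℝ) = f x := hfv x
    rw [h0] at h2 h3
    simp only [inner_zero_left] at h2 h3
    linarith
  refine ⟨v, hvne, fun w hw => ?_⟩
  -- f ≤ f x on K, since K ⊆ closure (interior K)
  have hK : K ⊆ {z : ℂ | f z ≤ f x} := by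
    apply subset_of_interior_subset hcv hne
    · exact isClosed_le (f.continuous) continuous_const
    · exact fun a ha => le_of_lt (hf a ha)
  have : f w ≤ f x := hK hw
  rw [inner_sub_right]
  rw [hfv w, hfv x]
  linarith

/-- Monotonicity of perimeter: the boundary of a convex body inside a compact set
has smaller 1-dimensional Hausdorff measure. -/
lemma perim_mono {K L : Set ℂ} (hKcpt : IsCompact K) (hKcv : Convex ℝ K)
    (hKint : (interior K).Nonempty) (hLcpt : IsCompact L) (hKL : K ⊆ L) :
    μH[1] (frontier K) ≤ μH[1] (frontier L) := by
  have hKne : K.Nonempty := hKint.mono interior_subset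
  have hKcl : IsClosed K := hKcpt.isClosed
  choose P hPmem hPvar using fun z => exists_proj hKne hKcpt hKcv z
  have hPlip : LipschitzWith 1 P := by
    refine LipschitzWith.of_dist_le_mul fun z₁ z₂ => ?_
    simpa using var_lip (hPmem z₁) (hPmem z₂) (hPvar z₁) (hPvar z₂)
  have hsurj : frontier K ⊆ P '' frontier L := by
    intro x hx
    have hxK : x ∈ K := by rw [hKcl.frontier_eq] at hx; exact hx.1
    obtain ⟨v, hv0, hv⟩ := exists_support hKcv hKcl hKint hx
    obtain ⟨R, hR⟩ := hLcpt.isBounded.subset_closedBall 0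
    have hvpos : 0 < ‖v‖ := norm_pos_iff.mpr hv0
    have hRx : ‖x‖ ≤ R := by
      have := hR (hKL hxK)
      simpa [Metric.mem_closedBall, Complex.dist_eq] using this
    have hR0 : 0 ≤ R := le_trans (norm_nonneg x) hRx
    set tmax : ℝ := (R + ‖x‖ + 1) / ‖v‖ with htmax_def
    have htmaxpos : 0 < tmax := by positivity
    set zz : ℝ → ℂ := fun t => x + t • v with hzz_def
    have hzzc : Continuous zz := by
      apply continuous_const.add
      exact (continuous_id.smul continuous_const)
    set S : Set ℝ := {t : ℝ | t ∈ Icc 0 tmax ∧ zz t ∈ L} with hS_def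
    have hS0 : (0:ℝ) ∈ S := by
      constructor
      · exact ⟨le_refl 0, htmaxpos.le⟩
      · simp only [hzz_def, zero_smul, add_zero]
        exact hKL hxK
    have hScl : IsClosed S := by
      apply IsClosed.inter isClosed_Icc
      exact hLcpt.isClosed.preimage hzzc
    have hSbdd : BddAbove S := ⟨tmax, fun t ht => ht.1.2⟩
    set ts : ℝ := sSup S with hts_def
    have htsS : ts ∈ S := hScl.csSup_mem ⟨0, hS0⟩ hSbdd
    have hts0 : 0 ≤ ts := le_csSup hSbdd hS0
    have hzend : zz tmax ∉ L := by
      intro hmem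
      have h1 : ‖zz tmax‖ ≤ R := by
        have := hR hmem
        simpa [Metric.mem_closedBall, Complex.dist_eq] using this
      have h2 : ‖zz tmax‖ ≥ tmax * ‖v‖ - ‖x‖ := by
        have h4 := norm_sub_le (x + tmax • v) x
        have h5 : x + tmax • v - x = tmax • v := by ring
        rw [h5] at h4
        have h6 : ‖(tmax • v : ℂ)‖ = tmax * ‖v‖ := by
          rw [norm_smul, Real.norm_eq_abs, abs_of_pos htmaxpos]
        simp only [hzz_def]
        linarith
      have h3 : tmax * ‖v‖ = R + ‖x‖ + 1 := by
        rw [htmax_def, div_mul_cancel₀]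
        exact ne_of_gt hvpos
      linarith
    have htslt : ts < tmax := by
      rcases lt_or_eq_of_le (htsS.1.2) with h | h
      · exact h
      · exact absurd (h ▸ htsS.2) hzend
    have hfr : zz ts ∈ frontier L := by
      rw [hLcpt.isClosed.frontier_eq]
      refine ⟨htsS.2, fun hint => ?_⟩
      have : zz ⁻¹' interior L ∈ nhds ts := (isOpen_interior.preimage hzzc).mem_nhds hint
      obtain ⟨δ, hδ0, hδ⟩ := Metric.mem_nhds_iff.1 this
      set t' : ℝ := min (ts + δ/2) tmax with ht'_def
      have ht'S : t' ∈ S := by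
        constructor
        · exact ⟨le_trans hts0 (le_min (by linarith) htslt.le), min_le_right _ _⟩
        · apply interior_subset
          apply hδ
          simp only [Metric.mem_ball, Real.dist_eq]
          have h1 : ts ≤ t' := le_min (by linarith) htslt.le
          have h2 : t' ≤ ts + δ/2 := min_le_left _ _
          rw [abs_of_nonneg (by linarith)]
          linarith
      have : t' ≤ ts := le_csSup hSbdd ht'S
      have h1 : ts < t' := lt_min (by linarith) htslt
      linarith
    refine ⟨zz ts, hfr, ?_⟩
    -- x satisfies the variational inequality for zz ts, hence P (zz ts) = x
    have hxvar : ∀ w ∈ K, (inner ℝ (zz ts - x) (w - x) : ℝ) ≤ 0 := by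
      intro w hw
      have : zz ts - x = ts • v := by simp [hzz_def]
      rw [this, real_inner_smul_left]
      exact mul_nonpos_of_nonneg_of_nonpos hts0 (hv w hw)
    have hd := var_lip (hPmem (zz ts)) hxK (hPvar (zz ts)) hxvar
    rw [dist_self] at hd
    exact dist_eq_zero.1 (le_antisymm hd dist_nonneg)
  calc μH[1] (frontier K) ≤ μH[1] (P '' frontier L) := measure_mono hsurj
    _ ≤ μH[1] (frontier L) := by
        simpa using hPlip.hausdorffMeasure_image_le zero_le_one (frontier L)

/-- The circle has finite 1-dimensional Hausdorff measure. -/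
lemma sphere_meas_lt_top {R : ℝ} (hR : 0 < R) : μH[1] (sphere (0:ℂ) R) < ⊤ := by
  set φ : ℝ → ℂ := fun t => (R:ℂ) * Complex.exp (t * Complex.I) with hφ_def
  have hcover : sphere (0:ℂ) R ⊆ φ '' Icc (-Real.pi) Real.pi := by
    intro z hz
    have hzabs : ‖z‖ = R := by
      simpa [Complex.dist_eq] using hz
    have hzne : z ≠ 0 := by
      intro h; rw [h] at hzabs; simp at hzabs; linarith
    refine ⟨z.arg, ⟨(Complex.neg_pi_lt_arg z).le, Complex.arg_le_pi z⟩, ?_⟩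
    simp only [hφ_def]
    rw [← hzabs]
    exact Complex.norm_mul_exp_arg_mul_I z
  have hder : ∀ t : ℝ, HasDerivAt φ ((R:ℂ) * (Complex.exp (t * Complex.I) * (1 * Complex.I))) t := by
    intro t
    have h1 : HasDerivAt (fun s : ℝ => (s : ℂ) * Complex.I) (1 * Complex.I) t :=
      (Complex.ofRealCLM.hasDerivAt).mul_const Complex.I
    exact (h1.cexp).const_mul (R:ℂ)
  have hlip : LipschitzWith R.toNNReal φ := by
    apply lipschitzWith_of_nnnorm_deriv_le
    · exact fun t => (hder t).differentiableAt
    · intro t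
      rw [(hder t).deriv]
      have : ‖(R:ℂ) * (Complex.exp (t * Complex.I) * (1 * Complex.I))‖ = R := by
        simp [map_mul, Complex.norm_exp_ofReal_mul_I, abs_of_pos hR]
      rw [← NNReal.coe_le_coe]
      simp only [coe_nnnorm, this, Real.coe_toNNReal _ hR.le]
      exact le_refl R
  calc μH[1] (sphere (0:ℂ) R) ≤ μH[1] (φ '' Icc (-Real.pi) Real.pi) := measure_mono hcover
    _ ≤ (R.toNNReal : ℝ≥0∞) ^ (1:ℝ) * μH[1] (Icc (-Real.pi) Real.pi) :=
        hlip.hausdorffMeasure_image_le zero_le_one _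
    _ < ⊤ := by
      rw [MeasureTheory.hausdorffMeasure_real, Real.volume_Icc]
      apply ENNReal.mul_lt_top
      · simp
      · exact ENNReal.ofReal_lt_top
  
/-- The perimeter of a convex body is finite. -/
lemma perim_lt_top {K : Set ℂ} (hcpt : IsCompact K) (hcv : Convex ℝ K)
    (hint : (interior K).Nonempty) : μH[1] (frontier K) < ⊤ := by
  obtain ⟨R₀, hR₀⟩ := hcpt.isBounded.subset_closedBall 0
  have hKne : K.Nonempty := hint.mono interior_subset
  obtain ⟨k, hk⟩ := hKne
  have hR₀0 : 0 ≤ R₀ := le_trans dist_nonneg (hR₀ hk)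
  set R : ℝ := R₀ + 1 with hR_def
  have hRpos : 0 < R := by linarith
  have hsub : K ⊆ closedBall 0 R := fun z hz =>
    closedBall_subset_closedBall (by linarith) (hR₀ hz)
  have hmono := perim_mono hcpt hcv hint (isCompact_closedBall 0 R) hsub
  rw [frontier_closedBall 0 (ne_of_gt hRpos)] at hmono
  exact lt_of_le_of_lt hmono (sphere_meas_lt_top hRpos)

/-- A nonempty compact convex subset of a line (level set of a nonzero functional)
is a segment. -/
lemma chord_eq_segment {s : Set ℂ} (hcpt : IsCompact s) (hcv : Convex ℝ s)
    (hne : s.Nonempty) {f : ℂ →L[ℝ] ℝ} {c : ℝ} (hs : ∀ z ∈ s, f z = c)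
    (hf0 : ∃ z w : ℂ, f z ≠ f w) :
    ∃ x y : ℂ, x ∈ s ∧ y ∈ s ∧ s = segment ℝ x y := by
  -- explicit kernel vector
  set w₀ : ℂ := (f Complex.I : ℝ) - (f 1 : ℝ) * Complex.I with hw₀_def
  have hfsplit : ∀ z : ℂ, f z = z.re * f 1 + z.im * f Complex.I := by
    intro z
    have hz : z = (z.re : ℂ) + (z.im : ℂ) * Complex.I := (Complex.re_add_im z).symm
    conv_lhs => rw [hz]
    rw [map_add]
    have e1 : (z.re : ℂ) = z.re • (1:ℂ) := by simp [Complex.real_smul]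
    have e2 : (z.im : ℂ) * Complex.I = z.im • Complex.I := by simp [Complex.real_smul]
    rw [e1, e2, f.map_smul, f.map_smul]
    simp [smul_eq_mul]
  have hfne : ¬ (f 1 = 0 ∧ f Complex.I = 0) := by
    rintro ⟨h1, h2⟩
    obtain ⟨z, w, hzw⟩ := hf0
    apply hzw
    rw [hfsplit z, hfsplit w, h1, h2]
    ring
  have hw₀re : w₀.re = f Complex.I := by simp [hw₀_def]
  have hw₀im : w₀.im = -(f 1) := by simp [hw₀_def]
  have hsmul_re : ∀ (a : ℝ) (ww : ℂ), (a • ww).re = a * ww.re := fun a ww => by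
    simp [Complex.real_smul, Complex.mul_re]
  have hsmul_im : ∀ (a : ℝ) (ww : ℂ), (a • ww).im = a * ww.im := fun a ww => by
    simp [Complex.real_smul, Complex.mul_im]
  have hker : ∀ ζ : ℂ, f ζ = 0 → ∃ a : ℝ, ζ = a • w₀ := by
    intro ζ hζ
    rw [hfsplit ζ] at hζ
    by_cases h1 : f 1 = 0
    · have h2 : f Complex.I ≠ 0 := fun h => hfne ⟨h1, h⟩
      have him : ζ.im = 0 := by
        rw [h1] at hζ
        have h3 : ζ.im * f Complex.I = 0 := by linarith
        rcases mul_eq_zero.1 h3 with h | h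
        · exact h
        · exact absurd h h2
      refine ⟨ζ.re / f Complex.I, ?_⟩
      apply Complex.ext
      · rw [hsmul_re, hw₀re]
        field_simp
      · rw [hsmul_im, hw₀im, h1, him]
        ring
    · refine ⟨-ζ.im / f 1, ?_⟩
      have hre : ζ.re = -ζ.im * f Complex.I / f 1 := by
        field_simp
        linarith
      apply Complex.ext
      · rw [hsmul_re, hw₀re, hre]
        field_simp
      · rw [hsmul_im, hw₀im]
        field_simp
  -- min/max of the inner ℝ coordinate
  have hGcont : Continuous (fun ζ : ℂ => (inner ℝ w₀ ζ : ℝ)) := by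
    exact continuous_const.inner continuous_id
  obtain ⟨x, hxs, hxmin⟩ := hcpt.exists_isMinOn hne hGcont.continuousOn
  obtain ⟨y, hys, hymax⟩ := hcpt.exists_isMaxOn hne hGcont.continuousOn
  refine ⟨x, y, hxs, hys, ?_⟩
  apply Subset.antisymm
  · intro z hz
    have hzx : f (z - x) = 0 := by rw [map_sub, hs z hz, hs x hxs]; ring
    have hyx : f (y - x) = 0 := by rw [map_sub, hs y hys, hs x hxs]; ring
    obtain ⟨a, haz⟩ := hker _ hzx
    obtain ⟨b, hby⟩ := hker _ hyx
    have hw₀sq : (inner ℝ w₀ w₀ : ℝ) = ‖w₀‖^2 := real_inner_self_eq_norm_sq w₀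
    have hw₀pos : 0 < ‖w₀‖^2 := by
      have hw₀ne : w₀ ≠ 0 := by
        intro h
        apply hfne
        have hre : w₀.re = 0 := by rw [h]; simp
        have him : w₀.im = 0 := by rw [h]; simp
        constructor
        · have : w₀.im = -(f 1) := by simp [hw₀_def]
          rw [this] at him; linarith
        · have : w₀.re = f Complex.I := by simp [hw₀_def]
          rw [this] at hre; exact hre
      exact pow_pos (norm_pos_iff.mpr hw₀ne) 2
    have hGz : (inner ℝ w₀ (z - x) : ℝ) = a * ‖w₀‖^2 := by
      rw [haz, real_inner_smul_right, hw₀sq]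
    have hGy : (inner ℝ w₀ (y - x) : ℝ) = b * ‖w₀‖^2 := by
      rw [hby, real_inner_smul_right, hw₀sq]
    have hxz : (inner ℝ w₀ x : ℝ) ≤ inner ℝ w₀ z := hxmin hz
    have hzy' : (inner ℝ w₀ z : ℝ) ≤ inner ℝ w₀ y := hymax hz
    have hsub1 : (inner ℝ w₀ (z - x) : ℝ) = inner ℝ w₀ z - inner ℝ w₀ x := inner_sub_right _ _ _
    have hsub2 : (inner ℝ w₀ (y - x) : ℝ) = inner ℝ w₀ y - inner ℝ w₀ x := inner_sub_right _ _ _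
    have ha0 : 0 ≤ a := by nlinarith
    have hab : a ≤ b := by nlinarith
    rcases eq_or_lt_of_le ha0 with ha' | hapos
    · -- a = 0, z = x
      have hzx0 : z - x = 0 := by rw [haz, ← ha', zero_smul]
      have : z = x := sub_eq_zero.mp hzx0
      rw [this]
      exact left_mem_segment ℝ x y
    · have hbpos : 0 < b := lt_of_lt_of_le hapos hab
      rw [segment_eq_image' ℝ x y]
      refine ⟨a / b, ⟨by positivity, by rw [div_le_one hbpos]; exact hab⟩, ?_⟩
      show x + (a / b) • (y - x) = z
      rw [hby, smul_smul, div_mul_cancel₀ _ (ne_of_gt hbpos), ← haz]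
      abel
  · rw [segment_eq_image' ℝ x y]
    rintro z ⟨t, ht, rfl⟩
    have := hcv.segment_subset hxs hys
    apply this
    rw [segment_eq_image' ℝ x y]
    exact ⟨t, ht, rfl⟩


set_option maxHeartbeats 2000000 in
/-- Main geometric estimate: a convex body containing a ball has perimeter strictly
greater than twice the distance between any two of its points. -/
lemma perim_gt_two_chord {C : Set ℂ} (hcpt : IsCompact C) (hcv : Convex ℝ C)
    {z₀ : ℂ} {r : ℝ} (hr : 0 < r) (hball : closedBall z₀ r ⊆ C)
    {x y : ℂ} (hx : x ∈ C) (hy : y ∈ C) :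
    ENNReal.ofReal (2 * dist x y) < μH[1] (frontier C) := by
  classical
  -- ### the direction `u` from `x` to `y`
  obtain ⟨u, hu, hdxy0⟩ : ∃ u : ℂ, ‖u‖ = 1 ∧
      ((y - x) * (starRingEnd ℂ) u).re = dist x y := by
    by_cases hxy : x = y
    · exact ⟨1, by simp, by simp [hxy]⟩
    · have hyx : y - x ≠ 0 := sub_ne_zero.mpr (Ne.symm hxy)
      have hnorm : (0:ℝ) < ‖y - x‖ := norm_pos_iff.mpr hyx
      refine ⟨‖y - x‖⁻¹ • (y - x), ?_, ?_⟩
      · rw [norm_smul, norm_inv, norm_norm]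
        exact inv_mul_cancel₀ (ne_of_gt hnorm)
      · rw [Complex.real_smul, map_mul, Complex.conj_ofReal]
        have h1 : (y - x) * (((‖y - x‖⁻¹ : ℝ) : ℂ) * (starRingEnd ℂ) (y - x))
            = ((‖y - x‖⁻¹ : ℝ) : ℂ) * ((y - x) * (starRingEnd ℂ) (y - x)) := by ring
        rw [h1, Complex.mul_conj]
        have h2 : Complex.normSq (y - x) = ‖y - x‖ ^ 2 := by
          rw [← Complex.sq_norm]
        rw [h2]
        have h3 : (((‖y - x‖⁻¹ : ℝ) : ℂ) * ((‖y - x‖ ^ 2 : ℝ) : ℂ)).re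
            = ‖y - x‖⁻¹ * ‖y - x‖ ^ 2 := by
          rw [← Complex.ofReal_mul, Complex.ofReal_re]
        have hnorm' : ‖x - y‖ ≠ 0 := by rw [norm_sub_rev]; exact ne_of_gt hnorm
        rw [h3, dist_eq_norm, norm_sub_rev, pow_two, ← mul_assoc,
          inv_mul_cancel₀ hnorm', one_mul]
  have hune : u ≠ 0 := by
    intro h; rw [h] at hu; simp at hu
  have hcune : (starRingEnd ℂ) u ≠ 0 := by simpa using hune
  have hucu : u * (starRingEnd ℂ) u = 1 := by
    rw [Complex.mul_conj]
    rw [show Complex.normSq u = 1 by rw [← Complex.sq_norm, hu]; norm_num]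
    simp
  have hIu1 : ‖Complex.I * u‖ = 1 := by
    rw [norm_mul, Complex.norm_I, one_mul, hu]
  -- ### coordinates
  set gg : ℂ → ℝ := fun z => (z * (starRingEnd ℂ) u).re with hgg_def
  set hh : ℂ → ℝ := fun z => (z * (starRingEnd ℂ) u).im with hhh_def
  have hggcont : Continuous gg := Complex.continuous_re.comp (continuous_id.mul continuous_const)
  have hhhcont : Continuous hh := Complex.continuous_im.comp (continuous_id.mul continuous_const)
  have hcoord : ∀ z w : ℂ, gg z = gg w → hh z = hh w → z = w := by
    intro z w h1 h2
    have h3 : z * (starRingEnd ℂ) u = w * (starRingEnd ℂ) u := Complex.ext h1 h2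
    exact mul_right_cancel₀ hcune h3
  have hmove_u : ∀ (z : ℂ) (s : ℝ), gg (z + s • u) = gg z + s ∧ hh (z + s • u) = hh z := by
    intro z s
    have h1 : (z + s • u) * (starRingEnd ℂ) u = z * (starRingEnd ℂ) u + (s:ℂ) := by
      rw [add_mul, Complex.real_smul, mul_assoc, hucu, mul_one]
    constructor
    · show ((z + s • u) * (starRingEnd ℂ) u).re = (z * (starRingEnd ℂ) u).re + s
      rw [h1, Complex.add_re, Complex.ofReal_re]
    · show ((z + s • u) * (starRingEnd ℂ) u).im = (z * (starRingEnd ℂ) u).im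
      rw [h1, Complex.add_im, Complex.ofReal_im, add_zero]
  have hmove_iu : ∀ (z : ℂ) (s : ℝ),
      gg (z + s • (Complex.I * u)) = gg z ∧ hh (z + s • (Complex.I * u)) = hh z + s := by
    intro z s
    have h1 : (z + s • (Complex.I * u)) * (starRingEnd ℂ) u
        = z * (starRingEnd ℂ) u + (s:ℂ) * Complex.I := by
      rw [add_mul, Complex.real_smul]
      have h2 : (s:ℂ) * (Complex.I * u) * (starRingEnd ℂ) u
          = (s:ℂ) * Complex.I * (u * (starRingEnd ℂ) u) := by ring
      rw [h2, hucu, mul_one]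
    constructor
    · show ((z + s • (Complex.I * u)) * (starRingEnd ℂ) u).re = (z * (starRingEnd ℂ) u).re
      rw [h1, Complex.add_re]
      simp
    · show ((z + s • (Complex.I * u)) * (starRingEnd ℂ) u).im
        = (z * (starRingEnd ℂ) u).im + s
      rw [h1, Complex.add_im]
      simp
  have hlin : ∀ (a b : ℝ) (z w : ℂ), gg (a • z + b • w) = a * gg z + b * gg w ∧
      hh (a • z + b • w) = a * hh z + b * hh w := by
    intro a b z w
    have h1 : (a • z + b • w) * (starRingEnd ℂ) u
        = (a:ℂ) * (z * (starRingEnd ℂ) u) + (b:ℂ) * (w * (starRingEnd ℂ) u) := by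
      rw [Complex.real_smul, Complex.real_smul]; ring
    constructor
    · show ((a • z + b • w) * (starRingEnd ℂ) u).re
        = a * (z * (starRingEnd ℂ) u).re + b * (w * (starRingEnd ℂ) u).re
      rw [h1, Complex.add_re]
      simp [Complex.mul_re]
    · show ((a • z + b • w) * (starRingEnd ℂ) u).im
        = a * (z * (starRingEnd ℂ) u).im + b * (w * (starRingEnd ℂ) u).im
      rw [h1, Complex.add_im]
      simp [Complex.mul_im]
  have hdiffc : ∀ z w : ℂ, (z - w) * (starRingEnd ℂ) u
      = ((gg z - gg w : ℝ) : ℂ) + ((hh z - hh w : ℝ)) * Complex.I := by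
    intro z w
    have h1 : ((z - w) * (starRingEnd ℂ) u).re = gg z - gg w := by
      simp [hgg_def, sub_mul]
    have h2 : ((z - w) * (starRingEnd ℂ) u).im = hh z - hh w := by
      simp [hhh_def, sub_mul]
    conv_lhs => rw [← Complex.re_add_im ((z - w) * (starRingEnd ℂ) u)]
    rw [h1, h2]
  -- ### basic extrema
  have hCcl : IsClosed C := hcpt.isClosed
  have hCne : C.Nonempty := ⟨x, hx⟩
  obtain ⟨zα, hzαC, hzαmin⟩ := hcpt.exists_isMinOn hCne hggcont.continuousOn
  obtain ⟨zβ, hzβC, hzβmax⟩ := hcpt.exists_isMaxOn hCne hggcont.continuousOn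
  set α : ℝ := gg zα with hα_def
  set β : ℝ := gg zβ with hβ_def
  have hrange : ∀ z ∈ C, α ≤ gg z ∧ gg z ≤ β := fun z hz => ⟨hzαmin hz, hzβmax hz⟩
  have hz₀C : z₀ ∈ C := hball (mem_closedBall_self hr.le)
  set t₀ : ℝ := gg z₀ with ht₀_def
  have hmem_u : ∀ s : ℝ, |s| ≤ r → z₀ + s • u ∈ C := by
    intro s hs
    apply hball
    rw [Metric.mem_closedBall, dist_eq_norm]
    have h3 : z₀ + s • u - z₀ = s • u := by ring
    rw [h3, norm_smul, Real.norm_eq_abs]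
    rw [show ‖u‖ = 1 from by rw [hu], mul_one]
    exact hs
  have hmem_iu : ∀ s : ℝ, |s| ≤ r → z₀ + s • (Complex.I * u) ∈ C := by
    intro s hs
    apply hball
    rw [Metric.mem_closedBall, dist_eq_norm]
    have h3 : z₀ + s • (Complex.I * u) - z₀ = s • (Complex.I * u) := by ring
    rw [h3, norm_smul, Real.norm_eq_abs, hIu1, mul_one]
    exact hs
  have hαt₀ : α < t₀ := by
    have h1 := hmem_u (-r) (by rw [abs_neg, abs_of_pos hr])
    have h2 := (hrange _ h1).1
    rw [(hmove_u z₀ (-r)).1] at h2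
    linarith
  have ht₀β : t₀ < β := by
    have h1 := hmem_u r (by rw [abs_of_pos hr])
    have h2 := (hrange _ h1).2
    rw [(hmove_u z₀ r).1] at h2
    linarith
  have hαβ : α < β := lt_trans hαt₀ ht₀β
  have hd_le : dist x y ≤ β - α := by
    have h1 : ((y - x) * (starRingEnd ℂ) u).re = gg y - gg x := by
      simp [hgg_def, sub_mul]
    rw [← hdxy0, h1]
    linarith [(hrange x hx).1, (hrange x hx).2, (hrange y hy).1, (hrange y hy).2]
  -- ### chords and upper/lower boundary functions
  set Ch : ℝ → Set ℂ := fun t => C ∩ gg ⁻¹' {t} with hCh_def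
  have hChcpt : ∀ t, IsCompact (Ch t) :=
    fun _ => hcpt.inter_right ((isClosed_singleton).preimage hggcont)
  have hChne : ∀ t ∈ Icc α β, (Ch t).Nonempty := by
    intro t ht
    obtain ⟨z, hzC, hzg⟩ := (hcv.isPreconnected).intermediate_value hzαC hzβC
      hggcont.continuousOn ht
    exact ⟨z, hzC, hzg⟩
  have himgcpt : ∀ t, IsCompact (hh '' Ch t) := fun t => (hChcpt t).image hhhcont
  set M : ℝ → ℝ := fun t => sSup (hh '' Ch t) with hM_def
  set m : ℝ → ℝ := fun t => sInf (hh '' Ch t) with hm_def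
  have hMub : ∀ t, ∀ z ∈ Ch t, hh z ≤ M t :=
    fun t z hz => le_csSup (himgcpt t).bddAbove (mem_image_of_mem hh hz)
  have hmlb : ∀ t, ∀ z ∈ Ch t, m t ≤ hh z :=
    fun t z hz => csInf_le (himgcpt t).bddBelow (mem_image_of_mem hh hz)
  set τ : ℝ → ℂ := fun t => t • u + (M t) • (Complex.I * u) with hτ_def
  set σ : ℝ → ℂ := fun t => t • u + (m t) • (Complex.I * u) with hσ_def
  have hpt : ∀ (a b : ℝ), gg (a • u + b • (Complex.I * u)) = a ∧
      hh (a • u + b • (Complex.I * u)) = b := by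
    intro a b
    have h0 : a • u + b • (Complex.I * u) = (0 + a • u) + b • (Complex.I * u) := by
      rw [zero_add]
    rw [h0]
    have h1 := hmove_u 0 a
    have h2 := hmove_iu (0 + a • u) b
    have hgg0 : gg 0 = 0 := by simp [hgg_def]
    have hhh0 : hh 0 = 0 := by simp [hhh_def]
    constructor
    · rw [h2.1, h1.1, hgg0, zero_add]
    · rw [h2.2, h1.2, hhh0, zero_add]
  have hτgg : ∀ t, gg (τ t) = t := fun t => (hpt t (M t)).1
  have hτhh : ∀ t, hh (τ t) = M t := fun t => (hpt t (M t)).2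
  have hσgg : ∀ t, gg (σ t) = t := fun t => (hpt t (m t)).1
  have hσhh : ∀ t, hh (σ t) = m t := fun t => (hpt t (m t)).2
  have hτmem : ∀ t ∈ Icc α β, τ t ∈ Ch t := by
    intro t ht
    obtain ⟨zt, hztCh, hzth⟩ : ∃ zt ∈ Ch t, hh zt = M t := by
      obtain ⟨v, hv, hveq⟩ := (himgcpt t).sSup_mem ((hChne t ht).image hh)
      exact ⟨v, hv, hveq⟩
    have heq : τ t = zt := by
      apply hcoord
      · rw [hτgg t]
        have := hztCh.2
        simp only [mem_preimage, mem_singleton_iff] at this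
        exact this.symm
      · rw [hτhh t]; exact hzth.symm
    rw [heq]; exact hztCh
  have hσmem : ∀ t ∈ Icc α β, σ t ∈ Ch t := by
    intro t ht
    obtain ⟨zt, hztCh, hzth⟩ : ∃ zt ∈ Ch t, hh zt = m t := by
      obtain ⟨v, hv, hveq⟩ := (himgcpt t).sInf_mem ((hChne t ht).image hh)
      exact ⟨v, hv, hveq⟩
    have heq : σ t = zt := by
      apply hcoord
      · rw [hσgg t]
        have := hztCh.2
        simp only [mem_preimage, mem_singleton_iff] at this
        exact this.symm
      · rw [hσhh t]; exact hzth.symm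
    rw [heq]; exact hztCh
  have hball_iu : ∀ (w : ℂ) (ε s : ℝ), |s| < ε → w + s • (Complex.I * u) ∈ ball w ε := by
    intro w ε s hs
    rw [Metric.mem_ball, dist_eq_norm]
    have h3 : w + s • (Complex.I * u) - w = s • (Complex.I * u) := by ring
    rw [h3, norm_smul, Real.norm_eq_abs, hIu1, mul_one]
    exact hs
  have hτfr : ∀ t ∈ Icc α β, τ t ∈ frontier C := by
    intro t ht
    rw [hCcl.frontier_eq]
    refine ⟨(hτmem t ht).1, fun hint => ?_⟩
    obtain ⟨ε, hε, hbsub⟩ := Metric.isOpen_iff.1 isOpen_interior _ hint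
    have hmem2 : τ t + (ε/2) • (Complex.I * u) ∈ C := by
      refine interior_subset (hbsub (hball_iu _ _ _ ?_))
      rw [abs_of_pos (by linarith)]; linarith
    have hmemCh : τ t + (ε/2) • (Complex.I * u) ∈ Ch t := by
      refine ⟨hmem2, ?_⟩
      simp only [mem_preimage, mem_singleton_iff]
      rw [(hmove_iu (τ t) (ε/2)).1, hτgg]
    have hlast := hMub t _ hmemCh
    rw [(hmove_iu (τ t) (ε/2)).2, hτhh] at hlast
    linarith
  have hσfr : ∀ t ∈ Icc α β, σ t ∈ frontier C := by
    intro t ht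
    rw [hCcl.frontier_eq]
    refine ⟨(hσmem t ht).1, fun hint => ?_⟩
    obtain ⟨ε, hε, hbsub⟩ := Metric.isOpen_iff.1 isOpen_interior _ hint
    have hmem2 : σ t + (-(ε/2)) • (Complex.I * u) ∈ C := by
      refine interior_subset (hbsub (hball_iu _ _ _ ?_))
      rw [abs_neg, abs_of_pos (by linarith)]; linarith
    have hmemCh : σ t + (-(ε/2)) • (Complex.I * u) ∈ Ch t := by
      refine ⟨hmem2, ?_⟩
      simp only [mem_preimage, mem_singleton_iff]
      rw [(hmove_iu (σ t) (-(ε/2))).1, hσgg]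
    have hlast := hmlb t _ hmemCh
    rw [(hmove_iu (σ t) (-(ε/2))).2, hσhh] at hlast
    linarith
  -- ### bounds at t₀
  have hM₀ : hh z₀ + r ≤ M t₀ := by
    have h1 := hmem_iu r (by rw [abs_of_pos hr])
    have h2 : z₀ + r • (Complex.I * u) ∈ Ch t₀ := by
      refine ⟨h1, ?_⟩
      simp only [mem_preimage, mem_singleton_iff]
      exact (hmove_iu z₀ r).1
    have h4 := hMub t₀ _ h2
    rw [(hmove_iu z₀ r).2] at h4
    linarith
  have hm₀ : m t₀ ≤ hh z₀ - r := by
    have h1 := hmem_iu (-r) (by rw [abs_neg, abs_of_pos hr])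
    have h2 : z₀ + (-r) • (Complex.I * u) ∈ Ch t₀ := by
      refine ⟨h1, ?_⟩
      simp only [mem_preimage, mem_singleton_iff]
      exact (hmove_iu z₀ (-r)).1
    have h4 := hmlb t₀ _ h2
    rw [(hmove_iu z₀ (-r)).2] at h4
    linarith
  -- ### concavity / convexity and continuity
  have hMconc : ConcaveOn ℝ (Icc α β) M := by
    refine ⟨convex_Icc α β, fun t₁ ht₁ t₂ ht₂ a b ha hb hab => ?_⟩
    have hw : a • τ t₁ + b • τ t₂ ∈ C := hcv (hτmem t₁ ht₁).1 (hτmem t₂ ht₂).1 ha hb hab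
    have hwCh : a • τ t₁ + b • τ t₂ ∈ Ch (a * t₁ + b * t₂) := by
      refine ⟨hw, ?_⟩
      simp only [mem_preimage, mem_singleton_iff]
      rw [(hlin a b (τ t₁) (τ t₂)).1, hτgg, hτgg]
    have h5 := hMub (a * t₁ + b * t₂) _ hwCh
    rw [(hlin a b (τ t₁) (τ t₂)).2, hτhh, hτhh] at h5
    simpa [smul_eq_mul] using h5
  have hmconv : ConvexOn ℝ (Icc α β) m := by
    refine ⟨convex_Icc α β, fun t₁ ht₁ t₂ ht₂ a b ha hb hab => ?_⟩
    have hw : a • σ t₁ + b • σ t₂ ∈ C := hcv (hσmem t₁ ht₁).1 (hσmem t₂ ht₂).1 ha hb hab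
    have hwCh : a • σ t₁ + b • σ t₂ ∈ Ch (a * t₁ + b * t₂) := by
      refine ⟨hw, ?_⟩
      simp only [mem_preimage, mem_singleton_iff]
      rw [(hlin a b (σ t₁) (σ t₂)).1, hσgg, hσgg]
    have h5 := hmlb (a * t₁ + b * t₂) _ hwCh
    rw [(hlin a b (σ t₁) (σ t₂)).2, hσhh, hσhh] at h5
    simpa [smul_eq_mul] using h5
  have hMcont : ContinuousOn M (Ioo α β) :=
    (hMconc.subset Ioo_subset_Icc_self (convex_Ioo α β)).continuousOn isOpen_Ioo
  have hmcont : ContinuousOn m (Ioo α β) :=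
    (hmconv.subset Ioo_subset_Icc_self (convex_Ioo α β)).continuousOn isOpen_Ioo
  have hτcont : ContinuousOn τ (Ioo α β) :=
    (continuousOn_id.smul continuousOn_const).add (hMcont.smul continuousOn_const)
  have hσcont : ContinuousOn σ (Ioo α β) :=
    (continuousOn_id.smul continuousOn_const).add (hmcont.smul continuousOn_const)
  -- ### strict separation m < M on the interior levels
  have hintne : (interior C).Nonempty := by
    refine ⟨z₀, interior_maximal ((ball_subset_closedBall).trans hball) isOpen_ball
      (mem_ball_self hr)⟩
  have hglip : ∀ z w : ℂ, |gg z - gg w| ≤ dist z w := by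
    intro z w
    have h5 := (lip_re_mul u (le_of_eq hu)).dist_le_mul z w
    rw [Real.dist_eq] at h5
    show |(z * (starRingEnd ℂ) u).re - (w * (starRingEnd ℂ) u).re| ≤ dist z w
    simpa using h5
  have hJ : ∀ t ∈ Ioo α β, ∃ w ∈ interior C, gg w = t := by
    intro t ht
    have hclα : zα ∈ closure (interior C) := subset_closure_interior hcv hintne hzαC
    have hclβ : zβ ∈ closure (interior C) := subset_closure_interior hcv hintne hzβC
    obtain ⟨w₁, hw₁, hw₁d⟩ := Metric.mem_closure_iff.1 hclα (t - α) (by linarith [ht.1])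
    obtain ⟨w₂, hw₂, hw₂d⟩ := Metric.mem_closure_iff.1 hclβ (β - t) (by linarith [ht.2])
    have hgw₁ : gg w₁ < t := by
      have h5 := hglip zα w₁
      have h6 := abs_lt.1 (lt_of_le_of_lt h5 hw₁d)
      have h7 : gg zα = α := rfl
      rw [h7] at h6
      linarith [h6.1, h6.2]
    have hgw₂ : t < gg w₂ := by
      have h5 := hglip zβ w₂
      have h6 := abs_lt.1 (lt_of_le_of_lt h5 hw₂d)
      have h7 : gg zβ = β := rfl
      rw [h7] at h6
      linarith [h6.1, h6.2]
    set a : ℝ := (gg w₂ - t) / (gg w₂ - gg w₁) with ha_def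
    have hden : 0 < gg w₂ - gg w₁ := by linarith
    have ha0 : 0 ≤ a := div_nonneg (by linarith) hden.le
    have ha1 : a ≤ 1 := by rw [div_le_one hden]; linarith
    refine ⟨a • w₁ + (1 - a) • w₂, hcv.interior hw₁ hw₂ ha0 (by linarith) (by ring), ?_⟩
    rw [(hlin a (1 - a) w₁ w₂).1]
    rw [ha_def]
    field_simp
    ring
  have hMm : ∀ t ∈ Ioo α β, m t < M t := by
    intro t ht
    obtain ⟨w, hwint, hwg⟩ := hJ t ht
    obtain ⟨ε, hε, hbsub⟩ := Metric.isOpen_iff.1 isOpen_interior _ hwint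
    have hup : w + (ε/2) • (Complex.I * u) ∈ Ch t := by
      refine ⟨interior_subset (hbsub (hball_iu _ _ _ ?_)), ?_⟩
      · rw [abs_of_pos (by linarith)]; linarith
      · simp only [mem_preimage, mem_singleton_iff]
        rw [(hmove_iu w (ε/2)).1, hwg]
    have hdn : w + (-(ε/2)) • (Complex.I * u) ∈ Ch t := by
      refine ⟨interior_subset (hbsub (hball_iu _ _ _ ?_)), ?_⟩
      · rw [abs_neg, abs_of_pos (by linarith)]; linarith
      · simp only [mem_preimage, mem_singleton_iff]
        rw [(hmove_iu w (-(ε/2))).1, hwg]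
    have h1 := hMub t _ hup
    have h2 := hmlb t _ hdn
    rw [(hmove_iu w (ε/2)).2] at h1
    rw [(hmove_iu w (-(ε/2))).2] at h2
    linarith
  -- ### cluster points at the ends
  have hclust : ∀ (F : ℝ → ℂ), (∀ t ∈ Ioo α β, F t ∈ C ∧ gg (F t) = t) →
      ∀ (A : Set ℝ) (s : ℝ), A ⊆ Ioo α β →
      (∃ sq : ℕ → ℝ, (∀ n, sq n ∈ A) ∧ Filter.Tendsto sq Filter.atTop (nhds s)) →
      ∃ zc, zc ∈ C ∧ gg zc = s ∧ zc ∈ closure (F '' A) := by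
    rintro F hF A s hA ⟨sq, hsqA, hsqlim⟩
    have hmem : ∀ n, F (sq n) ∈ C := fun n => (hF _ (hA (hsqA n))).1
    obtain ⟨zc, hzcC, φ, hφ, hφlim⟩ := hcpt.tendsto_subseq hmem
    refine ⟨zc, hzcC, ?_, ?_⟩
    · have h1 : Filter.Tendsto (fun n => gg (F (sq (φ n)))) Filter.atTop (nhds (gg zc)) :=
        (hggcont.tendsto zc).comp hφlim
      have h2 : ∀ n, gg (F (sq (φ n))) = sq (φ n) := fun n => (hF _ (hA (hsqA _))).2
      rw [show (fun n => gg (F (sq (φ n)))) = fun n => sq (φ n) from funext h2] at h1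
      have h3 : Filter.Tendsto (fun n => sq (φ n)) Filter.atTop (nhds s) :=
        hsqlim.comp hφ.tendsto_atTop
      exact tendsto_nhds_unique h1 h3
    · exact mem_closure_of_tendsto hφlim (Filter.Eventually.of_forall
        (fun n => mem_image_of_mem F (hsqA _)))
  have hseq_lo : ∀ (a b : ℝ), a < b → ∃ sq : ℕ → ℝ, (∀ n, sq n ∈ Ioo a b) ∧
      Filter.Tendsto sq Filter.atTop (nhds a) := by
    intro a b hab
    refine ⟨fun n => a + (b - a) / ((n : ℝ) + 2), fun n => ⟨?_, ?_⟩, ?_⟩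
    · have h5 : (0:ℝ) < (b - a) / ((n:ℝ) + 2) :=
        div_pos (by linarith) (by positivity)
      linarith
    · have h5 : (b - a) / ((n:ℝ) + 2) < b - a := by
        apply div_lt_self (by linarith)
        have h6 : (0:ℝ) ≤ (n:ℝ) := Nat.cast_nonneg n
        linarith
      linarith
    · have h1 : Filter.Tendsto (fun n : ℕ => (b - a) / ((n:ℝ) + 2)) Filter.atTop (nhds 0) :=
        Filter.Tendsto.div_atTop tendsto_const_nhds
          (Filter.tendsto_atTop_add_const_right _ 2 tendsto_natCast_atTop_atTop)
      simpa using tendsto_const_nhds.add h1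
  have hseq_hi : ∀ (a b : ℝ), a < b → ∃ sq : ℕ → ℝ, (∀ n, sq n ∈ Ioo a b) ∧
      Filter.Tendsto sq Filter.atTop (nhds b) := by
    intro a b hab
    refine ⟨fun n => b - (b - a) / ((n : ℝ) + 2), fun n => ⟨?_, ?_⟩, ?_⟩
    · have h5 : (b - a) / ((n:ℝ) + 2) < b - a := by
        apply div_lt_self (by linarith)
        have h6 : (0:ℝ) ≤ (n:ℝ) := Nat.cast_nonneg n
        linarith
      linarith
    · have h5 : (0:ℝ) < (b - a) / ((n:ℝ) + 2) :=
        div_pos (by linarith) (by positivity)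
      linarith
    · have h1 : Filter.Tendsto (fun n : ℕ => (b - a) / ((n:ℝ) + 2)) Filter.atTop (nhds 0) :=
        Filter.Tendsto.div_atTop tendsto_const_nhds
          (Filter.tendsto_atTop_add_const_right _ 2 tendsto_natCast_atTop_atTop)
      simpa using tendsto_const_nhds.sub h1
  have hτCh' : ∀ t ∈ Ioo α β, τ t ∈ C ∧ gg (τ t) = t := fun t ht =>
    ⟨(hτmem t (Ioo_subset_Icc_self ht)).1, hτgg t⟩
  have hσCh' : ∀ t ∈ Ioo α β, σ t ∈ C ∧ gg (σ t) = t := fun t ht =>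
    ⟨(hσmem t (Ioo_subset_Icc_self ht)).1, hσgg t⟩
  have hIoo_sub' : Ioo α t₀ ⊆ Ioo α β := fun s hs => ⟨hs.1, lt_trans hs.2 ht₀β⟩
  have hIco_sub' : Ico t₀ β ⊆ Ioo α β := fun s hs => ⟨lt_of_lt_of_le hαt₀ hs.1, hs.2⟩
  obtain ⟨zA, hzAC, hzAg, hzAcl⟩ := hclust τ hτCh' (Ioo α t₀) α hIoo_sub' (hseq_lo α t₀ hαt₀)
  obtain ⟨zA', hzA'C, hzA'g, hzA'cl⟩ := hclust σ hσCh' (Ioo α t₀) α hIoo_sub' (hseq_lo α t₀ hαt₀)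
  obtain ⟨zB, hzBC, hzBg, hzBcl⟩ := hclust τ hτCh' (Ico t₀ β) β hIco_sub' (by
    obtain ⟨sq, h1, h2⟩ := hseq_hi t₀ β ht₀β
    exact ⟨sq, fun n => ⟨(h1 n).1.le, (h1 n).2⟩, h2⟩)
  obtain ⟨zB', hzB'C, hzB'g, hzB'cl⟩ := hclust σ hσCh' (Ico t₀ β) β hIco_sub' (by
    obtain ⟨sq, h1, h2⟩ := hseq_hi t₀ β ht₀β
    exact ⟨sq, fun n => ⟨(h1 n).1.le, (h1 n).2⟩, h2⟩)
  -- ### the six pieces of the boundary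
  set G1 : Set ℂ := τ '' Ioo α t₀ with hG1_def
  set G2 : Set ℂ := τ '' Ico t₀ β with hG2_def
  set G3 : Set ℂ := σ '' Ioo α t₀ with hG3_def
  set G4 : Set ℂ := σ '' Ico t₀ β with hG4_def
  set EA : Set ℂ := Ch α with hEA_def
  set EB : Set ℂ := Ch β with hEB_def
  have hIoo_sub : Ioo α t₀ ⊆ Icc α β := fun s hs => Ioo_subset_Icc_self (hIoo_sub' hs)
  have hIco_sub : Ico t₀ β ⊆ Icc α β := fun s hs => Ioo_subset_Icc_self (hIco_sub' hs)
  have hG1fr : G1 ⊆ frontier C := by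
    rintro _ ⟨t, ht, rfl⟩; exact hτfr t (hIoo_sub ht)
  have hG2fr : G2 ⊆ frontier C := by
    rintro _ ⟨t, ht, rfl⟩; exact hτfr t (hIco_sub ht)
  have hG3fr : G3 ⊆ frontier C := by
    rintro _ ⟨t, ht, rfl⟩; exact hσfr t (hIoo_sub ht)
  have hG4fr : G4 ⊆ frontier C := by
    rintro _ ⟨t, ht, rfl⟩; exact hσfr t (hIco_sub ht)
  have hEAfr : EA ⊆ frontier C := by
    rintro z ⟨hzC, hzg⟩
    simp only [mem_preimage, mem_singleton_iff] at hzg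
    rw [hCcl.frontier_eq]
    refine ⟨hzC, fun hint => ?_⟩
    obtain ⟨ε, hε, hbsub⟩ := Metric.isOpen_iff.1 isOpen_interior _ hint
    have hmem2 : z + (-(ε/2)) • u ∈ C := by
      refine interior_subset (hbsub ?_)
      rw [Metric.mem_ball, dist_eq_norm]
      have h3 : z + (-(ε/2)) • u - z = (-(ε/2)) • u := by ring
      rw [h3, norm_smul, Real.norm_eq_abs, abs_neg, abs_of_pos (by linarith)]
      rw [show ‖u‖ = 1 from by rw [hu], mul_one]; linarith
    have h4 := (hrange _ hmem2).1
    rw [(hmove_u z (-(ε/2))).1, hzg] at h4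
    linarith
  have hEBfr : EB ⊆ frontier C := by
    rintro z ⟨hzC, hzg⟩
    simp only [mem_preimage, mem_singleton_iff] at hzg
    rw [hCcl.frontier_eq]
    refine ⟨hzC, fun hint => ?_⟩
    obtain ⟨ε, hε, hbsub⟩ := Metric.isOpen_iff.1 isOpen_interior _ hint
    have hmem2 : z + (ε/2) • u ∈ C := by
      refine interior_subset (hbsub ?_)
      rw [Metric.mem_ball, dist_eq_norm]
      have h3 : z + (ε/2) • u - z = (ε/2) • u := by ring
      rw [h3, norm_smul, Real.norm_eq_abs, abs_of_pos (by linarith)]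
      rw [show ‖u‖ = 1 from by rw [hu], mul_one]; linarith
    have h4 := (hrange _ hmem2).2
    rw [(hmove_u z (ε/2)).1, hzg] at h4
    linarith
  have hsub_fr : G1 ∪ (G2 ∪ (G3 ∪ (G4 ∪ (EA ∪ EB)))) ⊆ frontier C := by
    refine union_subset hG1fr (union_subset hG2fr (union_subset hG3fr
      (union_subset hG4fr (union_subset hEAfr hEBfr))))
  -- ### measurability
  have hkey : ∀ (F : ℝ → ℂ), ContinuousOn F (Ioo α β) → (∀ t ∈ Ioo α β, gg (F t) = t) →
      ∀ (A : Set ℝ), A ⊆ Ioo α β → MeasurableSet A → MeasurableSet (F '' A) := by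
    intro F hFc hFg A hA hAm
    have heq : F '' A = closure (F '' A) ∩ gg ⁻¹' A := by
      apply Subset.antisymm
      · rintro _ ⟨t, htA, rfl⟩
        refine ⟨subset_closure (mem_image_of_mem F htA), ?_⟩
        simp only [mem_preimage]
        rw [hFg t (hA htA)]
        exact htA
      · rintro z ⟨hzc, hzg⟩
        simp only [mem_preimage] at hzg
        obtain ⟨w, hwmem, hwlim⟩ := mem_closure_iff_seq_limit.1 hzc
        choose sq hsqA hsqF using hwmem
        have hgz : Filter.Tendsto (fun n => gg (w n)) Filter.atTop (nhds (gg z)) :=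
          (hggcont.tendsto z).comp hwlim
        have h2 : ∀ n, gg (w n) = sq n := by
          intro n
          rw [← hsqF n]
          exact hFg _ (hA (hsqA n))
        rw [show (fun n => gg (w n)) = sq from funext h2] at hgz
        have hFc' : ContinuousAt F (gg z) :=
          hFc.continuousAt (Ioo_mem_nhds (hA hzg).1 (hA hzg).2)
        have h3 : Filter.Tendsto (fun n => F (sq n)) Filter.atTop (nhds (F (gg z))) :=
          (hFc'.tendsto).comp hgz
        rw [show (fun n => F (sq n)) = w from funext (fun n => hsqF n)] at h3
        have h4 : z = F (gg z) := tendsto_nhds_unique hwlim h3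
        exact ⟨gg z, hzg, h4.symm⟩
    rw [heq]
    exact isClosed_closure.measurableSet.inter (hAm.preimage hggcont.measurable)
  have hG1m : MeasurableSet G1 :=
    hkey τ hτcont (fun t _ => hτgg t) _ hIoo_sub' measurableSet_Ioo
  have hG2m : MeasurableSet G2 :=
    hkey τ hτcont (fun t _ => hτgg t) _ hIco_sub' measurableSet_Ico
  have hG3m : MeasurableSet G3 :=
    hkey σ hσcont (fun t _ => hσgg t) _ hIoo_sub' measurableSet_Ioo
  have hG4m : MeasurableSet G4 :=
    hkey σ hσcont (fun t _ => hσgg t) _ hIco_sub' measurableSet_Ico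
  have hEAm : MeasurableSet EA :=
    (hCcl.inter (isClosed_singleton.preimage hggcont)).measurableSet
  have hEBm : MeasurableSet EB :=
    (hCcl.inter (isClosed_singleton.preimage hggcont)).measurableSet
  -- ### disjointness
  have hgG1 : ∀ z ∈ G1, gg z ∈ Ioo α t₀ := by
    rintro _ ⟨t, ht, rfl⟩; rw [hτgg]; exact ht
  have hgG2 : ∀ z ∈ G2, gg z ∈ Ico t₀ β := by
    rintro _ ⟨t, ht, rfl⟩; rw [hτgg]; exact ht
  have hgG3 : ∀ z ∈ G3, gg z ∈ Ioo α t₀ := by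
    rintro _ ⟨t, ht, rfl⟩; rw [hσgg]; exact ht
  have hgG4 : ∀ z ∈ G4, gg z ∈ Ico t₀ β := by
    rintro _ ⟨t, ht, rfl⟩; rw [hσgg]; exact ht
  have hgEA : ∀ z ∈ EA, gg z ∈ ({α} : Set ℝ) := by
    rintro z ⟨_, hzg⟩; exact hzg
  have hgEB : ∀ z ∈ EB, gg z ∈ ({β} : Set ℝ) := by
    rintro z ⟨_, hzg⟩; exact hzg
  have hrngdisj : ∀ {A B : Set ℂ} {P Q : Set ℝ}, (∀ z ∈ A, gg z ∈ P) → (∀ z ∈ B, gg z ∈ Q) →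
      (∀ s : ℝ, s ∈ P → s ∈ Q → False) → Disjoint A B := by
    intro A B P Q hA hB hPQ
    rw [Set.disjoint_left]
    intro z hzA hzB
    exact hPQ _ (hA z hzA) (hB z hzB)
  have d12 : Disjoint G1 G2 := hrngdisj hgG1 hgG2 (fun s h1 h2 => absurd h2.1 (not_le.mpr h1.2))
  have d14 : Disjoint G1 G4 := hrngdisj hgG1 hgG4 (fun s h1 h2 => absurd h2.1 (not_le.mpr h1.2))
  have d32 : Disjoint G3 G2 := hrngdisj hgG3 hgG2 (fun s h1 h2 => absurd h2.1 (not_le.mpr h1.2))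
  have d34 : Disjoint G3 G4 := hrngdisj hgG3 hgG4 (fun s h1 h2 => absurd h2.1 (not_le.mpr h1.2))
  have d1A : Disjoint G1 EA := hrngdisj hgG1 hgEA
    (fun s h1 h2 => by rw [mem_singleton_iff] at h2; rw [h2] at h1; exact lt_irrefl α h1.1)
  have d1B : Disjoint G1 EB := hrngdisj hgG1 hgEB
    (fun s h1 h2 => by
      rw [mem_singleton_iff] at h2; rw [h2] at h1; exact absurd (lt_trans h1.2 ht₀β) (lt_irrefl β))
  have d2A : Disjoint G2 EA := hrngdisj hgG2 hgEA
    (fun s h1 h2 => by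
      rw [mem_singleton_iff] at h2; rw [h2] at h1; exact absurd (lt_of_lt_of_le hαt₀ h1.1) (lt_irrefl α))
  have d2B : Disjoint G2 EB := hrngdisj hgG2 hgEB
    (fun s h1 h2 => by rw [mem_singleton_iff] at h2; rw [h2] at h1; exact lt_irrefl β h1.2)
  have d3A : Disjoint G3 EA := hrngdisj hgG3 hgEA
    (fun s h1 h2 => by rw [mem_singleton_iff] at h2; rw [h2] at h1; exact lt_irrefl α h1.1)
  have d3B : Disjoint G3 EB := hrngdisj hgG3 hgEB
    (fun s h1 h2 => by
      rw [mem_singleton_iff] at h2; rw [h2] at h1; exact absurd (lt_trans h1.2 ht₀β) (lt_irrefl β))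
  have d4A : Disjoint G4 EA := hrngdisj hgG4 hgEA
    (fun s h1 h2 => by
      rw [mem_singleton_iff] at h2; rw [h2] at h1; exact absurd (lt_of_lt_of_le hαt₀ h1.1) (lt_irrefl α))
  have d4B : Disjoint G4 EB := hrngdisj hgG4 hgEB
    (fun s h1 h2 => by rw [mem_singleton_iff] at h2; rw [h2] at h1; exact lt_irrefl β h1.2)
  have dAB : Disjoint EA EB := hrngdisj hgEA hgEB
    (fun s h1 h2 => by
      rw [mem_singleton_iff] at h1 h2; rw [h1] at h2; exact absurd h2 (ne_of_lt hαβ))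
  have d13 : Disjoint G1 G3 := by
    rw [Set.disjoint_left]
    rintro _ ⟨t, ht, rfl⟩ ⟨t', ht', heq⟩
    have h1 : t' = t := by rw [← hσgg t', heq, hτgg]
    rw [h1] at heq
    have h2 : m t = M t := by rw [← hσhh t, heq, hτhh]
    exact absurd h2 (ne_of_lt (hMm t (hIoo_sub' ht)))
  have d24 : Disjoint G2 G4 := by
    rw [Set.disjoint_left]
    rintro _ ⟨t, ht, rfl⟩ ⟨t', ht', heq⟩
    have h1 : t' = t := by rw [← hσgg t', heq, hτgg]
    rw [h1] at heq
    have h2 : m t = M t := by rw [← hσhh t, heq, hτhh]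
    exact absurd h2 (ne_of_lt (hMm t (hIco_sub' ht)))
  -- ### additivity of measure over the pieces
  have htotal : μH[1] (G1 ∪ (G2 ∪ (G3 ∪ (G4 ∪ (EA ∪ EB)))))
      = μH[1] G1 + (μH[1] G2 + (μH[1] G3 + (μH[1] G4 + (μH[1] EA + μH[1] EB)))) := by
    rw [measure_union (disjoint_union_right.mpr ⟨d12, disjoint_union_right.mpr ⟨d13,
        disjoint_union_right.mpr ⟨d14, disjoint_union_right.mpr ⟨d1A, d1B⟩⟩⟩⟩)
      (hG2m.union (hG3m.union (hG4m.union (hEAm.union hEBm))))]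
    rw [measure_union (disjoint_union_right.mpr ⟨d32.symm, disjoint_union_right.mpr ⟨d24,
        disjoint_union_right.mpr ⟨d2A, d2B⟩⟩⟩)
      (hG3m.union (hG4m.union (hEAm.union hEBm)))]
    rw [measure_union (disjoint_union_right.mpr ⟨d34, disjoint_union_right.mpr ⟨d3A, d3B⟩⟩)
      (hG4m.union (hEAm.union hEBm))]
    rw [measure_union (disjoint_union_right.mpr ⟨d4A, d4B⟩) (hEAm.union hEBm)]
    rw [measure_union dAB hEBm]
  -- ### connectivity of the pieces
  have hG1conn : IsPreconnected G1 := isPreconnected_Ioo.image τ (hτcont.mono hIoo_sub')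
  have hG2conn : IsPreconnected G2 := isPreconnected_Ico.image τ (hτcont.mono hIco_sub')
  have hG3conn : IsPreconnected G3 := isPreconnected_Ioo.image σ (hσcont.mono hIoo_sub')
  have hG4conn : IsPreconnected G4 := isPreconnected_Ico.image σ (hσcont.mono hIco_sub')
  have hEAconv : Convex ℝ EA := by
    rintro z ⟨hzC, hzg⟩ w ⟨hwC, hwg⟩ a b ha hb hab
    simp only [mem_preimage, mem_singleton_iff] at hzg hwg
    refine ⟨hcv hzC hwC ha hb hab, ?_⟩
    simp only [mem_preimage, mem_singleton_iff]
    rw [(hlin a b z w).1, hzg, hwg, ← add_mul, hab, one_mul]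
  have hEBconv : Convex ℝ EB := by
    rintro z ⟨hzC, hzg⟩ w ⟨hwC, hwg⟩ a b ha hb hab
    simp only [mem_preimage, mem_singleton_iff] at hzg hwg
    refine ⟨hcv hzC hwC ha hb hab, ?_⟩
    simp only [mem_preimage, mem_singleton_iff]
    rw [(hlin a b z w).1, hzg, hwg, ← add_mul, hab, one_mul]
  -- ### the generic lower bound from `gbound`
  have gb : ∀ (T : Set ℂ), IsPreconnected T → ∀ p q : ℂ, p ∈ closure T → q ∈ closure T →
      ENNReal.ofReal (‖((gg q - gg p : ℝ) : ℂ) + ((hh q - hh p : ℝ)) * Complex.I‖)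
        ≤ μH[1] T := by
    intro T hT p q hp hq
    set Wc : ℂ := ((gg q - gg p : ℝ) : ℂ) + ((hh q - hh p : ℝ)) * Complex.I with hWc_def
    by_cases hWc0 : Wc = 0
    · rw [hWc0]; simp
    · have habs : 0 < ‖Wc‖ := norm_pos_iff.mpr hWc0
      set w : ℂ := (((‖Wc‖)⁻¹ : ℝ) : ℂ) * (Wc * u) with hw_def
      have hwabs : ‖w‖ = 1 := by
        rw [hw_def, norm_mul, norm_mul, Complex.norm_real, Real.norm_eq_abs, hu, mul_one,
          abs_of_pos (inv_pos.mpr habs)]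
        exact inv_mul_cancel₀ (ne_of_gt habs)
      have hgb := gbound T hT w p q (le_of_eq hwabs) hp hq
      have hval : ((q - p) * (starRingEnd ℂ) w).re = ‖Wc‖ := by
        rw [hw_def, map_mul, map_mul, Complex.conj_ofReal]
        have h1 : (q - p) * ((((‖Wc‖)⁻¹ : ℝ):ℂ)
              * ((starRingEnd ℂ) Wc * (starRingEnd ℂ) u))
            = (((‖Wc‖)⁻¹ : ℝ):ℂ) * (((q - p) * (starRingEnd ℂ) u)
              * (starRingEnd ℂ) Wc) := by ring
        rw [h1, hdiffc q p, ← hWc_def, Complex.mul_conj]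
        rw [show Complex.normSq Wc = ‖Wc‖ ^ 2 from (Complex.sq_norm Wc).symm]
        rw [← Complex.ofReal_mul, Complex.ofReal_re, pow_two, ← mul_assoc,
          inv_mul_cancel₀ (ne_of_gt habs), one_mul]
      rw [hval] at hgb
      exact hgb
  -- ### closure memberships of the endpoints
  have hτt₀cl : τ t₀ ∈ closure G1 := by
    obtain ⟨sq, hsq, hsqlim⟩ := hseq_hi α t₀ hαt₀
    have h1 : Filter.Tendsto (fun n => τ (sq n)) Filter.atTop (nhds (τ t₀)) :=
      ((hτcont.continuousAt (Ioo_mem_nhds hαt₀ ht₀β)).tendsto).comp hsqlim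
    exact mem_closure_of_tendsto h1
      (Filter.Eventually.of_forall (fun n => mem_image_of_mem τ (hsq n)))
  have hσt₀cl : σ t₀ ∈ closure G3 := by
    obtain ⟨sq, hsq, hsqlim⟩ := hseq_hi α t₀ hαt₀
    have h1 : Filter.Tendsto (fun n => σ (sq n)) Filter.atTop (nhds (σ t₀)) :=
      ((hσcont.continuousAt (Ioo_mem_nhds hαt₀ ht₀β)).tendsto).comp hsqlim
    exact mem_closure_of_tendsto h1
      (Filter.Eventually.of_forall (fun n => mem_image_of_mem σ (hsq n)))
  have hτt₀G2 : τ t₀ ∈ closure G2 :=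
    subset_closure (mem_image_of_mem τ ⟨le_refl t₀, ht₀β⟩)
  have hσt₀G4 : σ t₀ ∈ closure G4 :=
    subset_closure (mem_image_of_mem σ ⟨le_refl t₀, ht₀β⟩)
  have hzAEA : zA ∈ closure EA := subset_closure ⟨hzAC, by
    simp only [mem_preimage, mem_singleton_iff]; exact hzAg⟩
  have hzA'EA : zA' ∈ closure EA := subset_closure ⟨hzA'C, by
    simp only [mem_preimage, mem_singleton_iff]; exact hzA'g⟩
  have hzBEB : zB ∈ closure EB := subset_closure ⟨hzBC, by
    simp only [mem_preimage, mem_singleton_iff]; exact hzBg⟩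
  have hzB'EB : zB' ∈ closure EB := subset_closure ⟨hzB'C, by
    simp only [mem_preimage, mem_singleton_iff]; exact hzB'g⟩
  -- ### the six lower bounds
  set Δ₁ : ℝ := t₀ - α with hΔ₁_def
  set Δ₂ : ℝ := β - t₀ with hΔ₂_def
  set v₁ : ℝ := M t₀ - hh zA with hv₁_def
  set v₂ : ℝ := hh zB - M t₀ with hv₂_def
  set w₁ : ℝ := m t₀ - hh zA' with hw₁_def
  set w₂ : ℝ := hh zB' - m t₀ with hw₂_def
  set eA : ℝ := hh zA - hh zA' with heA_def
  set eB : ℝ := hh zB - hh zB' with heB_def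
  have hB1 := gb G1 hG1conn zA (τ t₀) hzAcl hτt₀cl
  rw [hτgg, hτhh, hzAg] at hB1
  have hB2 := gb G2 hG2conn (τ t₀) zB hτt₀G2 hzBcl
  rw [hτgg, hτhh, hzBg] at hB2
  have hB3 := gb G3 hG3conn zA' (σ t₀) hzA'cl hσt₀cl
  rw [hσgg, hσhh, hzA'g] at hB3
  have hB4 := gb G4 hG4conn (σ t₀) zB' hσt₀G4 hzB'cl
  rw [hσgg, hσhh, hzB'g] at hB4
  have hB5 := gb EA hEAconv.isPreconnected zA' zA hzA'EA hzAEA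
  rw [hzAg, hzA'g] at hB5
  have hB6 := gb EB hEBconv.isPreconnected zB' zB hzB'EB hzBEB
  rw [hzBg, hzB'g] at hB6
  -- rewrite the cap bounds
  have hcap : ∀ e : ℝ, ‖((0:ℝ) : ℂ) + (e : ℝ) * Complex.I‖ = |e| := by
    intro e
    rw [Complex.norm_def, Complex.normSq_add_mul_I]
    rw [show (0:ℝ)^2 + e^2 = e^2 by ring, Real.sqrt_sq_eq_abs]
  have hsubA : α - α = (0:ℝ) := by ring
  rw [hsubA, hcap eA] at hB5
  have hsubB : β - β = (0:ℝ) := by ring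
  rw [hsubB, hcap eB] at hB6
  -- ### real arithmetic
  set A1 : ℝ := ‖((Δ₁ : ℝ) : ℂ) + (v₁ : ℝ) * Complex.I‖ with hA1_def
  set A2 : ℝ := ‖((Δ₂ : ℝ) : ℂ) + (v₂ : ℝ) * Complex.I‖ with hA2_def
  set A3 : ℝ := ‖((Δ₁ : ℝ) : ℂ) + (w₁ : ℝ) * Complex.I‖ with hA3_def
  set A4 : ℝ := ‖((Δ₂ : ℝ) : ℂ) + (w₂ : ℝ) * Complex.I‖ with hA4_def
  have habsge : ∀ d v : ℝ, 0 ≤ d → d ≤ ‖(d : ℂ) + (v:ℝ) * Complex.I‖ := by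
    intro d v hd
    have h1 : ((d:ℂ) + (v:ℝ) * Complex.I).re = d := by simp
    calc d = |d| := (abs_of_nonneg hd).symm
      _ = |((d:ℂ) + (v:ℝ) * Complex.I).re| := by rw [h1]
      _ ≤ _ := Complex.abs_re_le_norm _
  have habsgt : ∀ d v : ℝ, 0 ≤ d → v ≠ 0 → d < ‖(d : ℂ) + (v:ℝ) * Complex.I‖ := by
    intro d v hd hv
    have h1 : (‖(d:ℂ) + (v:ℝ) * Complex.I‖) ^ 2 = d ^ 2 + v ^ 2 := by
      rw [Complex.sq_norm, Complex.normSq_add_mul_I]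
    have h2 : 0 ≤ ‖(d:ℂ) + (v:ℝ) * Complex.I‖ := norm_nonneg _
    have h3 : (0:ℝ) < v ^ 2 := lt_of_le_of_ne (sq_nonneg v) (Ne.symm (pow_ne_zero 2 hv))
    nlinarith [h3]
  have hΔ₁pos : 0 < Δ₁ := by rw [hΔ₁_def]; linarith
  have hΔ₂pos : 0 < Δ₂ := by rw [hΔ₂_def]; linarith
  have hA1ge : Δ₁ ≤ A1 := habsge Δ₁ v₁ hΔ₁pos.le
  have hA2ge : Δ₂ ≤ A2 := habsge Δ₂ v₂ hΔ₂pos.le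
  have hA3ge : Δ₁ ≤ A3 := habsge Δ₁ w₁ hΔ₁pos.le
  have hA4ge : Δ₂ ≤ A4 := habsge Δ₂ w₂ hΔ₂pos.le
  have hMm₀ : 2 * r ≤ M t₀ - m t₀ := by linarith
  have hkey2 : v₁ + eA - w₁ = M t₀ - m t₀ := by
    rw [hv₁_def, heA_def, hw₁_def]; ring
  have hstrict : 2 * dist x y < A1 + (A2 + (A3 + (A4 + (|eA| + |eB|)))) := by
    have hbase : 2 * dist x y ≤ 2 * Δ₁ + 2 * Δ₂ := by
      have : 2 * dist x y ≤ 2 * (β - α) := by linarith [hd_le]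
      rw [hΔ₁_def, hΔ₂_def]; linarith
    by_cases heA0 : eA = 0
    · by_cases hv₁0 : v₁ = 0
      · have hw₁ne : w₁ ≠ 0 := by
          intro h
          rw [heA0, hv₁0, h] at hkey2
          simp at hkey2
          linarith
        have := habsgt Δ₁ w₁ hΔ₁pos.le hw₁ne
        rw [← hA3_def] at this
        have h6 : 0 ≤ |eA| := abs_nonneg _
        have h7 : 0 ≤ |eB| := abs_nonneg _
        linarith
      · have := habsgt Δ₁ v₁ hΔ₁pos.le hv₁0
        rw [← hA1_def] at this
        have h6 : 0 ≤ |eA| := abs_nonneg _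
        have h7 : 0 ≤ |eB| := abs_nonneg _
        linarith
    · have h5 : 0 < |eA| := abs_pos.mpr heA0
      have h7 : 0 ≤ |eB| := abs_nonneg _
      linarith
  -- ### conclusion in `ℝ≥0∞`
  have hXpos : 0 < A1 + (A2 + (A3 + (A4 + (|eA| + |eB|)))) :=
    lt_of_le_of_lt (by positivity) hstrict
  have hofadd : ENNReal.ofReal (A1 + (A2 + (A3 + (A4 + (|eA| + |eB|)))))
      = ENNReal.ofReal A1 + (ENNReal.ofReal A2 + (ENNReal.ofReal A3
        + (ENNReal.ofReal A4 + (ENNReal.ofReal |eA| + ENNReal.ofReal |eB|)))) := by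
    rw [ENNReal.ofReal_add (norm_nonneg _) (by positivity),
      ENNReal.ofReal_add (norm_nonneg _) (by positivity),
      ENNReal.ofReal_add (norm_nonneg _) (by positivity),
      ENNReal.ofReal_add (norm_nonneg _) (by positivity),
      ENNReal.ofReal_add (abs_nonneg _) (abs_nonneg _)]
  calc ENNReal.ofReal (2 * dist x y)
      < ENNReal.ofReal (A1 + (A2 + (A3 + (A4 + (|eA| + |eB|))))) :=
        (ENNReal.ofReal_lt_ofReal_iff hXpos).mpr hstrict
    _ = ENNReal.ofReal A1 + (ENNReal.ofReal A2 + (ENNReal.ofReal A3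
        + (ENNReal.ofReal A4 + (ENNReal.ofReal |eA| + ENNReal.ofReal |eB|)))) := hofadd
    _ ≤ μH[1] G1 + (μH[1] G2 + (μH[1] G3 + (μH[1] G4 + (μH[1] EA + μH[1] EB)))) := by
        exact add_le_add hB1 (add_le_add hB2 (add_le_add hB3 (add_le_add hB4
          (add_le_add hB5 hB6))))
    _ = μH[1] (G1 ∪ (G2 ∪ (G3 ∪ (G4 ∪ (EA ∪ EB))))) := htotal.symm
    _ ≤ μH[1] (frontier C) := measure_mono hsub_fr

end PerimAux

open PerimAux in
/-- If a convex closed curve γ₁ (boundary of the compact convex set `K₁`) lies completely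
inside a convex closed curve γ₂ (boundary of `K₂`), and the curves are distinct, then the
perimeter (1-dimensional Hausdorff measure of the boundary) of γ₁ is strictly less than
that of γ₂. -/
theorem perimeter_lt_of_convex_subset
    (K₁ K₂ : Set ℂ) (h₁ : IsCompact K₁) (h₂ : IsCompact K₂)
    (hc₁ : Convex ℝ K₁) (hc₂ : Convex ℝ K₂)
    (hint₁ : (interior K₁).Nonempty) (hint₂ : (interior K₂).Nonempty)
    (hsub : K₁ ⊆ K₂) (hne : K₁ ≠ K₂) :
    μH[1] (frontier K₁) < μH[1] (frontier K₂) := by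
  classical
  obtain ⟨p, hpK₂, hpK₁⟩ : ∃ p, p ∈ K₂ ∧ p ∉ K₁ := by
    by_contra hcon
    push_neg at hcon
    exact hne (Subset.antisymm hsub hcon)
  obtain ⟨f, c, hfK₁, hfp⟩ := geometric_hahn_banach_closed_point hc₁ h₁.isClosed hpK₁
  set K₃ : Set ℂ := K₂ ∩ {z | f z ≤ c} with hK₃_def
  set K₄ : Set ℂ := K₂ ∩ {z | c ≤ f z} with hK₄_def
  set seg : Set ℂ := K₂ ∩ {z | f z = c} with hseg_def
  have hK₃cpt : IsCompact K₃ := h₂.inter_right (isClosed_le f.continuous continuous_const)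
  have hK₄cpt : IsCompact K₄ := h₂.inter_right (isClosed_le continuous_const f.continuous)
  have hK₄conv : Convex ℝ K₄ := hc₂.inter (convex_halfSpace_ge (f.toLinearMap.isLinear) c)
  have hK₁K₃ : K₁ ⊆ K₃ := fun z hz => ⟨hsub hz, le_of_lt (hfK₁ z hz)⟩
  have hmono := perim_mono h₁ hc₁ hint₁ hK₃cpt hK₁K₃
  have hfin₁ := perim_lt_top h₁ hc₁ hint₁
  by_cases hStop : μH[1] (frontier K₂) = ⊤
  · rw [hStop]
    exact lt_of_lt_of_le hfin₁ le_top
  -- interior point of K₂ strictly beyond the cut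
  obtain ⟨w₂, hw₂int, hw₂f⟩ : ∃ w₂ ∈ interior K₂, c < f w₂ := by
    by_contra hcon
    push_neg at hcon
    have hsubc : K₂ ⊆ {z | f z ≤ c} :=
      subset_of_interior_subset hc₂ hint₂
        (isClosed_le f.continuous continuous_const) (fun z hz => hcon z hz)
    exact absurd (hsubc hpK₂) (not_le.mpr hfp)
  have hopen : IsOpen (interior K₂ ∩ {z | c < f z}) :=
    isOpen_interior.inter (isOpen_lt continuous_const f.continuous)
  obtain ⟨ρ, hρ, hρsub⟩ := Metric.isOpen_iff.1 hopen w₂ ⟨hw₂int, hw₂f⟩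
  have hballK₄ : closedBall w₂ (ρ/2) ⊆ K₄ := by
    intro z hz
    rw [Metric.mem_closedBall] at hz
    have h5 : z ∈ ball w₂ ρ := by
      rw [Metric.mem_ball]; linarith
    have h6 := hρsub h5
    have h7 : c < f z := h6.2
    exact ⟨interior_subset h6.1, le_of_lt h7⟩
  -- the chord
  have hK₁ne : K₁.Nonempty := hint₁.mono interior_subset
  obtain ⟨a₀, ha₀⟩ := hK₁ne
  have hsegne : seg.Nonempty := by
    have h5 : Icc (f a₀) (f p) ⊆ f '' K₂ :=
      (hc₂.isPreconnected).intermediate_value (hsub ha₀) hpK₂ f.continuous.continuousOn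
    obtain ⟨z, hzK₂, hzf⟩ := h5 ⟨le_of_lt (hfK₁ a₀ ha₀), le_of_lt hfp⟩
    exact ⟨z, hzK₂, hzf⟩
  have hsegcpt : IsCompact seg := h₂.inter_right (isClosed_eq f.continuous continuous_const)
  have hsegconv : Convex ℝ seg := hc₂.inter (convex_hyperplane (f.toLinearMap.isLinear) c)
  obtain ⟨sx, sy, hsx, hsy, hsegeq⟩ := chord_eq_segment hsegcpt hsegconv hsegne
    (fun z hz => hz.2) ⟨p, a₀, ne_of_gt (lt_trans (hfK₁ a₀ ha₀) hfp)⟩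
  have hsegmeas : μH[1] seg = edist sx sy := by
    rw [hsegeq, hausdorffMeasure_segment]
  have hFF := perim_gt_two_chord hK₄cpt hK₄conv (by linarith : (0:ℝ) < ρ/2) hballK₄
    (⟨hsx.1, le_of_eq hsx.2.symm⟩ : sx ∈ K₄) (⟨hsy.1, le_of_eq hsy.2.symm⟩ : sy ∈ K₄)
  -- frontier K₄ is covered by the upper part of frontier K₂ and the chord
  have hfrK₄ : frontier K₄ ⊆ (frontier K₂ ∩ {z | c < f z}) ∪ seg := by
    intro z hz
    rw [hK₄cpt.isClosed.frontier_eq] at hz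
    obtain ⟨⟨hzK₂, hzc⟩, hznint⟩ := hz
    have hzc' : c ≤ f z := hzc
    rcases eq_or_lt_of_le hzc' with heq | hlt
    · exact Or.inr ⟨hzK₂, heq.symm⟩
    · refine Or.inl ⟨⟨subset_closure hzK₂, fun hzint => ?_⟩, hlt⟩
      apply hznint
      have hopen2 : IsOpen (interior K₂ ∩ {w | c < f w}) :=
        isOpen_interior.inter (isOpen_lt continuous_const f.continuous)
      have hsub2 : interior K₂ ∩ {w | c < f w} ⊆ K₄ := by
        rintro w ⟨hw1, hw2⟩
        have hw3 : c < f w := hw2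
        exact ⟨interior_subset hw1, le_of_lt hw3⟩
      exact interior_maximal hsub2 hopen2 ⟨hzint, hlt⟩
  have hBseg : μH[1] (frontier K₄)
      ≤ μH[1] (frontier K₂ ∩ {z | c < f z}) + μH[1] seg :=
    le_trans (measure_mono hfrK₄) (measure_union_le _ _)
  have h2seg : μH[1] seg + μH[1] seg < μH[1] (frontier K₄) := by
    rw [hsegmeas, edist_dist, ← ENNReal.ofReal_add dist_nonneg dist_nonneg]
    rw [show dist sx sy + dist sx sy = 2 * dist sx sy by ring]
    exact hFF
  have hsegfin : μH[1] seg ≠ ⊤ := by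
    rw [hsegmeas]
    exact edist_ne_top sx sy
  have hseglt : μH[1] seg < μH[1] (frontier K₂ ∩ {z | c < f z}) := by
    have h5 := lt_of_lt_of_le h2seg hBseg
    exact (ENNReal.add_lt_add_iff_right hsegfin).mp h5
  -- frontier K₃ is covered by the lower part of frontier K₂ and the chord
  have hfrK₃ : frontier K₃ ⊆ (frontier K₂ ∩ {z | f z < c}) ∪ seg := by
    intro z hz
    rw [hK₃cpt.isClosed.frontier_eq] at hz
    obtain ⟨⟨hzK₂, hzc⟩, hznint⟩ := hz
    have hzc' : f z ≤ c := hzc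
    rcases eq_or_lt_of_le hzc' with heq | hlt
    · exact Or.inr ⟨hzK₂, heq⟩
    · refine Or.inl ⟨⟨subset_closure hzK₂, fun hzint => ?_⟩, hlt⟩
      apply hznint
      have hopen2 : IsOpen (interior K₂ ∩ {w | f w < c}) :=
        isOpen_interior.inter (isOpen_lt f.continuous continuous_const)
      have hsub2 : interior K₂ ∩ {w | f w < c} ⊆ K₃ := by
        rintro w ⟨hw1, hw2⟩
        have hw3 : f w < c := hw2
        exact ⟨interior_subset hw1, le_of_lt hw3⟩
      exact interior_maximal hsub2 hopen2 ⟨hzint, hlt⟩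
  have hSfin : μH[1] (frontier K₂ ∩ {z | f z < c}) ≠ ⊤ := by
    intro h5
    exact hStop (top_unique (h5 ▸ measure_mono inter_subset_left))
  calc μH[1] (frontier K₁) ≤ μH[1] (frontier K₃) := hmono
    _ ≤ μH[1] (frontier K₂ ∩ {z | f z < c}) + μH[1] seg :=
        le_trans (measure_mono hfrK₃) (measure_union_le _ _)
    _ < μH[1] (frontier K₂ ∩ {z | f z < c}) + μH[1] (frontier K₂ ∩ {z | c < f z}) :=
        ENNReal.add_lt_add_left hSfin hseglt
    _ ≤ μH[1] (frontier K₂) := by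
        rw [← measure_union ?_ ?_]
        · exact measure_mono (union_subset inter_subset_left inter_subset_left)
        · rw [Set.disjoint_left]
          rintro z ⟨_, h5⟩ ⟨_, h6⟩
          simp only [mem_setOf_eq] at h5 h6
          linarith
        · exact (isClosed_frontier.measurableSet).inter
            ((isOpen_lt continuous_const f.continuous).measurableSet)
end

section
/- Let K be a compact convex region in ℝ² with boundary curve γ, let x ∈ interior(K), and suppose γ is a critical point of F(γ) = length(γ) − ∫∫_K B dx dy under homothety with center x: i.e., the derivative at p = 0 of F applied to the dilation of γ by factor (1+p) about x vanishes. If B ≤ B_max and the maximal distance from x to γ is d_max, then length(γ) ≤ length(γ)·d_max·B_max, hence d_max ≥ 1/B_max. -/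
open MeasureTheory ComplexConjugate


lemma piece_vol_le (x w₀ : ℂ) (hw : w₀ ≠ x) (S : Set ℂ) (hw₀ : w₀ ∈ S)
    (δ : ℝ) (hδ : ∀ w ∈ S, ∀ w' ∈ S, dist w w' ≤ δ)
    (D : ℝ) (hD : ∀ w ∈ S, dist x w ≤ D)
    (p : ℝ) (hp : 0 ≤ p) :
    volume {y : ℂ | ∃ w ∈ S, ∃ s ∈ Set.Icc (1:ℝ) (1+p), y = x + s • (w - x)} ≤
      ENNReal.ofReal ((p*D + 2*(1+p)*δ) * ((1+p)*δ)) := by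
  have hδ0 : 0 ≤ δ := le_trans dist_nonneg (hδ w₀ hw₀ w₀ hw₀)
  set u : ℂ := w₀ - x with hu_def
  have hu : u ≠ 0 := sub_ne_zero.2 hw
  have hun : ‖u‖ ≠ 0 := norm_ne_zero_iff.2 hu
  set c : ℂ := conj ((↑‖u‖)⁻¹ * u) with hc_def
  have hc : ‖c‖ = 1 := by
    rw [hc_def, RCLike.norm_conj, norm_mul, norm_inv, Complex.norm_real, norm_norm,
      inv_mul_cancel₀ hun]
  have hcu : c * u = (‖u‖ : ℂ) := by
    rw [hc_def]
    have h1 : (starRingEnd ℂ) u * u = ((‖u‖:ℂ) * ‖u‖) := by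
      rw [mul_comm, Complex.mul_conj]
      norm_cast
      rw [Complex.normSq_eq_norm_sq, sq]
    rw [map_mul, map_inv₀, Complex.conj_ofReal, mul_assoc, h1, ← mul_assoc,
      inv_mul_cancel₀ (by exact_mod_cast hun), one_mul]
  set α : ℂ → ℝ := fun w => (c * (w - w₀)).re with hα_def
  set β : ℂ → ℝ := fun w => (c * (w - w₀)).im with hβ_def
  have hnorm : ∀ w ∈ S, ∀ w' ∈ S, ‖c * (w - w₀) - c * (w' - w₀)‖ ≤ δ := by
    intro w hwS w' hw'S
    rw [← mul_sub, norm_mul, hc, one_mul]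
    have : w - w₀ - (w' - w₀) = w - w' := by ring
    rw [this, ← dist_eq_norm]
    exact hδ w hwS w' hw'S
  have hαb : ∀ w ∈ S, |α w| ≤ δ := by
    intro w hwS
    have := hnorm w hwS w₀ hw₀
    simp only [sub_self, mul_zero, sub_zero] at this
    exact le_trans (Complex.abs_re_le_norm _) this
  have hβb : ∀ w ∈ S, |β w| ≤ δ := by
    intro w hwS
    have := hnorm w hwS w₀ hw₀
    simp only [sub_self, mul_zero, sub_zero] at this
    exact le_trans (Complex.abs_im_le_norm _) this
  have hβd : ∀ w ∈ S, ∀ w' ∈ S, |β w - β w'| ≤ δ := by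
    intro w hwS w' hw'S
    calc |β w - β w'| = |(c * (w - w₀) - c * (w' - w₀)).im| := by
          rw [Complex.sub_im]
      _ ≤ ‖c * (w - w₀) - c * (w' - w₀)‖ := Complex.abs_im_le_norm _
      _ ≤ δ := by exact hnorm w hwS w' hw'S
  have hSne : (β '' S).Nonempty := ⟨β w₀, ⟨w₀, hw₀, rfl⟩⟩
  have hbdd : BddAbove (β '' S) ∧ BddBelow (β '' S) := by
    constructor
    · exact ⟨δ, by rintro b ⟨w, hwS, rfl⟩; exact le_of_abs_le (hβb w hwS)⟩
    · exact ⟨-δ, by rintro b ⟨w, hwS, rfl⟩; exact neg_le_of_abs_le (hβb w hwS)⟩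
  set M : ℝ := sSup (β '' S) with hM_def
  set m : ℝ := sInf (β '' S) with hm_def
  have hβw₀ : β w₀ = 0 := by simp [hβ_def]
  have hm0 : m ≤ 0 := hβw₀ ▸ csInf_le hbdd.2 ⟨w₀, hw₀, rfl⟩
  have hM0 : 0 ≤ M := hβw₀ ▸ le_csSup hbdd.1 ⟨w₀, hw₀, rfl⟩
  have hMm : M - m ≤ δ := by
    have : M ≤ m + δ := by
      apply csSup_le hSne
      rintro b ⟨w, hwS, rfl⟩
      have : β w - δ ≤ m := by
        apply le_csInf hSne
        rintro b' ⟨w', hw'S, rfl⟩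
        have := abs_le.1 (hβd w hwS w' hw'S)
        linarith [this.2]
      linarith
    linarith
  have hmem : ∀ w ∈ S, m ≤ β w ∧ β w ≤ M :=
    fun w hwS => ⟨csInf_le hbdd.2 ⟨w, hwS, rfl⟩, le_csSup hbdd.1 ⟨w, hwS, rfl⟩⟩
  have huD : ‖u‖ ≤ D := by
    rw [hu_def, norm_sub_rev, ← dist_eq_norm]; exact hD w₀ hw₀
  -- the rotation as a circle element
  set cc : Circle := ⟨c, by simpa [Submonoid.unitSphere, mem_sphere_zero_iff_norm] using hc⟩
    with hcc_def
  set R : Set ℂ := Complex.measurableEquivRealProd ⁻¹'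
      ((Set.Icc (-((1+p)*δ)) ((1+p)*δ + p*D)) ×ˢ (Set.Icc ((1+p)*m) ((1+p)*M))) with hR_def
  have hRmeas : MeasurableSet R :=
    (measurableSet_Icc.prod measurableSet_Icc).preimage Complex.measurableEquivRealProd.measurable
  have hφ : MeasurePreserving (fun z : ℂ => rotation cc (z - w₀)) volume volume :=
    (rotation cc).measurePreserving.comp (measurePreserving_sub_right volume w₀)
  have hccc : (cc : ℂ) = c := rfl
  have hsub : {y : ℂ | ∃ w ∈ S, ∃ s ∈ Set.Icc (1:ℝ) (1+p), y = x + s • (w - x)} ⊆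
      (fun z : ℂ => rotation cc (z - w₀)) ⁻¹' R := by
    rintro y ⟨w, hwS, s, ⟨hs1, hs2⟩, rfl⟩
    have hy : (x + s • (w - x)) - w₀ = (w - w₀) + (((s:ℝ) - 1 : ℝ) : ℂ) * (w - x) := by
      rw [Complex.real_smul]
      push_cast
      ring
    have hwx : c * (w - x) = c * (w - w₀) + (‖u‖ : ℂ) := by
      rw [← hcu, ← mul_add]
      congr 1
      rw [hu_def]; ring
    have hval : rotation cc ((x + s • (w - x)) - w₀) =
        c * (w - w₀) + (((s:ℝ) - 1 : ℝ) : ℂ) * (c * (w - x)) := by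
      rw [rotation_apply, hccc, hy]
      ring
    have hre : (rotation cc ((x + s • (w - x)) - w₀)).re
        = s * (c * (w - w₀)).re + (s - 1) * ‖u‖ := by
      rw [hval, hwx, Complex.add_re, Complex.re_ofReal_mul, Complex.add_re, Complex.ofReal_re]
      ring
    have him : (rotation cc ((x + s • (w - x)) - w₀)).im = s * β w := by
      rw [hval, hwx, Complex.add_im, Complex.im_ofReal_mul, Complex.add_im, Complex.ofReal_im,
        hβ_def]
      ring
    have hαw := abs_le.1 (hαb w hwS)
    rw [hα_def] at hαw
    have hβw := hmem w hwS
    have hβwm := hβw.1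
    have hβwM := hβw.2
    have hu0 : (0:ℝ) ≤ ‖u‖ := norm_nonneg u
    simp only [Set.mem_preimage, hR_def, Complex.measurableEquivRealProd_apply, Set.mem_prod,
      Set.mem_Icc]
    refine ⟨⟨?_, ?_⟩, ?_, ?_⟩
    · rw [hre]; nlinarith [hαw.1, hαw.2]
    · rw [hre]; nlinarith [hαw.1, hαw.2]
    · rw [him]; nlinarith
    · rw [him]; nlinarith
  have hD0 : 0 ≤ D := le_trans (norm_nonneg u) huD
  calc volume {y : ℂ | ∃ w ∈ S, ∃ s ∈ Set.Icc (1:ℝ) (1+p), y = x + s • (w - x)}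
      ≤ volume ((fun z : ℂ => rotation cc (z - w₀)) ⁻¹' R) := measure_mono hsub
    _ = volume R := hφ.measure_preimage hRmeas.nullMeasurableSet
    _ = volume ((Set.Icc (-((1+p)*δ)) ((1+p)*δ + p*D)) ×ˢ (Set.Icc ((1+p)*m) ((1+p)*M))) :=
        Complex.volume_preserving_equiv_real_prod.measure_preimage
          (measurableSet_Icc.prod measurableSet_Icc).nullMeasurableSet
    _ ≤ ENNReal.ofReal ((p*D + 2*(1+p)*δ) * ((1+p)*δ)) := by
        rw [MeasureTheory.Measure.volume_eq_prod, Measure.prod_prod, Real.volume_Icc, Real.volume_Icc]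
        rw [← ENNReal.ofReal_mul (by nlinarith)]
        apply ENNReal.ofReal_le_ofReal
        have h1 : (1+p) * (M - m) ≤ (1+p) * δ :=
          mul_le_mul_of_nonneg_left hMm (by linarith)
        have hA : (0:ℝ) ≤ (1+p)*δ + p*D - -((1+p)*δ) := by nlinarith
        have h2 := mul_nonneg hA (by linarith : (0:ℝ) ≤ (1+p)*δ - ((1+p)*M - (1+p)*m))
        nlinarith [h2]


lemma subset_homothety_image (K : Set ℂ) (hconv : Convex ℝ K) (x : ℂ) (hxK : x ∈ K)
    (p : ℝ) (hp : 0 ≤ p) : K ⊆ (AffineMap.homothety x (1+p) : ℂ →ᵃ[ℝ] ℂ) '' K := by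
  intro z hz
  have h1p : (0:ℝ) < 1 + p := by linarith
  refine ⟨x + (1/(1+p)) • (z - x), ?_, ?_⟩
  · have := hconv hxK hz (a := 1 - 1/(1+p)) (b := 1/(1+p))
      (by rw [sub_nonneg]; exact div_le_one_of_le₀ (by linarith) h1p.le)
      (by positivity) (by ring)
    convert this using 1
    module
  · rw [AffineMap.homothety_apply, vsub_eq_sub, vadd_eq_add, add_sub_cancel_left, smul_smul,
      mul_one_div, div_self h1p.ne', one_smul]
    abel

lemma exists_frontier_scale (K : Set ℂ) (hK : IsClosed K)
    (x : ℂ) (hx : x ∈ interior K) (p : ℝ) (hp : 0 ≤ p) (y : ℂ)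
    (hy : y ∈ (AffineMap.homothety x (1+p) : ℂ →ᵃ[ℝ] ℂ) '' K) (hyK : y ∉ K) :
    ∃ w ∈ frontier K, ∃ s ∈ Set.Icc (1:ℝ) (1+p), y = x + s • (w - x) := by
  obtain ⟨z, hzK, hzy⟩ := hy
  have hxK : x ∈ K := interior_subset hx
  have h1p : (0:ℝ) < 1 + p := by linarith
  have hyx : y ≠ x := fun h => hyK (h ▸ hxK)
  have hzy' : y = x + (1+p) • (z - x) := by
    rw [← hzy, AffineMap.homothety_apply, vsub_eq_sub, vadd_eq_add]; abel
  set S : Set ℝ := {t | t ∈ Set.Icc (0:ℝ) 1 ∧ x + t • (y - x) ∈ K} with hS_def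
  have hScomp : IsCompact S := by
    apply (isCompact_Icc (a := (0:ℝ)) (b := 1)).of_isClosed_subset
    · exact (isClosed_Icc).inter (IsClosed.preimage (by continuity) hK)
    · exact fun t ht => ht.1
  have hS0 : (0:ℝ) ∈ S := ⟨⟨le_refl 0, zero_le_one⟩, by simpa using hxK⟩
  have hSt₀ : (1/(1+p)) ∈ S := by
    constructor
    · exact ⟨by positivity, div_le_one_of_le₀ (by linarith) h1p.le⟩
    · have : x + (1/(1+p)) • (y - x) = z := by
        rw [hzy']
        have : (1/(1+p)) • ((1+p) • (z - x)) = z - x := by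
          rw [smul_smul, one_div, inv_mul_cancel₀ h1p.ne', one_smul]
        rw [add_sub_cancel_left, this]; abel
      rw [this]; exact hzK
  set τ : ℝ := sSup S with hτ_def
  have hτS : τ ∈ S := hScomp.sSup_mem ⟨0, hS0⟩
  have hτpos : 0 < τ := lt_of_lt_of_le (by positivity) (le_csSup hScomp.bddAbove hSt₀)
  have hτle : τ ≤ 1 := hτS.1.2
  have hτne : τ ≠ 1 := by
    intro h
    apply hyK
    have := hτS.2
    rw [h, one_smul] at this
    simpa using this
  have hτlt : τ < 1 := lt_of_le_of_ne hτle hτne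
  set w : ℂ := x + τ • (y - x) with hw_def
  have hwK : w ∈ K := hτS.2
  have hwfr : w ∈ frontier K := by
    rw [hK.frontier_eq]
    refine ⟨hwK, fun hwint => ?_⟩
    obtain ⟨r, hr, hball⟩ := Metric.isOpen_iff.1 isOpen_interior w hwint
    have hyx' : (0:ℝ) < ‖y - x‖ := by
      rw [norm_pos_iff]; exact sub_ne_zero.2 hyx
    set t' : ℝ := min 1 (τ + r / (2 * ‖y - x‖)) with ht'_def
    have ht'1 : t' ≤ 1 := min_le_left _ _
    have ht'gt : τ < t' := by
      apply lt_min hτlt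
      have : 0 < r / (2 * ‖y - x‖) := by positivity
      linarith
    have ht'S : t' ∈ S := by
      refine ⟨⟨le_trans hτpos.le ht'gt.le, ht'1⟩, ?_⟩
      apply interior_subset
      apply hball
      rw [Metric.mem_ball, dist_eq_norm]
      have : x + t' • (y - x) - w = (t' - τ) • (y - x) := by
        rw [hw_def]; module
      rw [this, norm_smul, Real.norm_eq_abs, abs_of_pos (by linarith)]
      have hne : ‖y - x‖ ≠ 0 := by
        exact hyx'.ne' 
      have ht'le : t' - τ ≤ r / (2 * ‖y - x‖) := by
        have := min_le_right 1 (τ + r / (2 * ‖y - x‖))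
        linarith [this]
      calc (t' - τ) * ‖y - x‖ ≤ (r / (2 * ‖y - x‖)) * ‖y - x‖ :=
            mul_le_mul_of_nonneg_right ht'le (norm_nonneg _)
        _ = r / 2 := by field_simp
        _ < r := by linarith
    exact absurd (le_csSup hScomp.bddAbove ht'S) (not_le.2 ht'gt)
  refine ⟨w, hwfr, τ⁻¹, ⟨?_, ?_⟩, ?_⟩
  · exact (one_le_inv₀ hτpos).2 hτle
  · have hτge : 1/(1+p) ≤ τ := le_csSup hScomp.bddAbove hSt₀
    have := inv_anti₀ (by positivity : (0:ℝ) < 1/(1+p)) hτge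
    rwa [one_div, inv_inv] at this
  · rw [hw_def]
    have : τ⁻¹ • (x + τ • (y - x) - x) = y - x := by
      rw [add_sub_cancel_left, smul_smul, inv_mul_cancel₀ hτpos.ne', one_smul]
    rw [this]; abel


lemma annulus_vol_le (K : Set ℂ) (hK : IsClosed K)
    (x : ℂ) (hx : x ∈ interior K) (dmax : ℝ)
    (hD : ∀ w ∈ frontier K, dist x w ≤ dmax)
    (t : ℕ → Set ℂ) (hcov : frontier K ⊆ ⋃ n, t n) (r : ℝ) (hr0 : 0 ≤ r)
    (hmesh : ∀ n, EMetric.diam (t n) ≤ ENNReal.ofReal r)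
    (p : ℝ) (hp : 0 ≤ p) :
    volume ((AffineMap.homothety x (1+p) : ℂ →ᵃ[ℝ] ℂ) '' K \ K) ≤
      ENNReal.ofReal ((p*dmax + 2*(1+p)*r) * (1+p)) *
        ∑' n, ⨆ _ : (t n).Nonempty, EMetric.diam (t n) := by
  set C : ℝ := (p*dmax + 2*(1+p)*r) * (1+p) with hC_def
  set T : ℕ → Set ℂ := fun n =>
    {y : ℂ | ∃ w ∈ t n ∩ frontier K, ∃ s ∈ Set.Icc (1:ℝ) (1+p), y = x + s • (w - x)}
    with hT_def
  have hsub : (AffineMap.homothety x (1+p) : ℂ →ᵃ[ℝ] ℂ) '' K \ K ⊆ ⋃ n, T n := by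
    rintro y ⟨hy1, hy2⟩
    obtain ⟨w, hwfr, s, hs, rfl⟩ := exists_frontier_scale K hK x hx p hp _ hy1 hy2
    obtain ⟨_, ⟨n, rfl⟩, hwn⟩ := hcov hwfr
    exact Set.mem_iUnion.2 ⟨n, ⟨w, ⟨hwn, hwfr⟩, s, hs, rfl⟩⟩
  have hpiece : ∀ n, volume (T n) ≤
      ENNReal.ofReal C * ⨆ _ : (t n).Nonempty, EMetric.diam (t n) := by
    intro n
    rcases Set.eq_empty_or_nonempty (t n ∩ frontier K) with he | ⟨w₀, hw₀⟩
    · have : T n = ∅ := by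
        rw [hT_def]
        simp only [he]
        simp
      rw [this]
      simp
    · have htne : (t n).Nonempty := ⟨w₀, hw₀.1⟩
      have hfin : EMetric.diam (t n) ≠ ⊤ :=
        ne_top_of_le_ne_top ENNReal.ofReal_ne_top (hmesh n)
      set δ : ℝ := (EMetric.diam (t n)).toReal with hδ_def
      have hδr : δ ≤ r := ENNReal.toReal_le_of_le_ofReal hr0 (hmesh n)
      have hδ0 : 0 ≤ δ := ENNReal.toReal_nonneg
      have hwx : w₀ ≠ x := by
        intro h
        have : x ∉ frontier K := by
          rw [hK.frontier_eq]
          intro hmem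
          exact hmem.2 hx
        exact this (h ▸ hw₀.2)
      have hδd : ∀ w ∈ t n ∩ frontier K, ∀ w' ∈ t n ∩ frontier K, dist w w' ≤ δ := by
        intro w hw w' hw'
        rw [dist_edist, hδ_def]
        exact ENNReal.toReal_mono hfin (EMetric.edist_le_diam_of_mem hw.1 hw'.1)
      have hDd : ∀ w ∈ t n ∩ frontier K, dist x w ≤ dmax := fun w hw => hD w hw.2
      calc volume (T n) ≤ ENNReal.ofReal ((p*dmax + 2*(1+p)*δ) * ((1+p)*δ)) :=
            piece_vol_le x w₀ hwx _ hw₀ δ hδd dmax hDd p hp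
        _ ≤ ENNReal.ofReal (C * δ) := by
            apply ENNReal.ofReal_le_ofReal
            have hdm : 0 ≤ dmax := le_trans dist_nonneg (hD w₀ hw₀.2)
            have h1 : p*dmax + 2*(1+p)*δ ≤ p*dmax + 2*(1+p)*r := by nlinarith
            have h2 : (0:ℝ) ≤ (1+p)*δ := by positivity
            rw [hC_def]
            nlinarith [mul_le_mul_of_nonneg_right h1 h2]
        _ = ENNReal.ofReal C * ENNReal.ofReal δ := ENNReal.ofReal_mul (by
            have hdm : 0 ≤ dmax := le_trans dist_nonneg (hD w₀ hw₀.2)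
            rw [hC_def]; positivity)
        _ = ENNReal.ofReal C * ⨆ _ : (t n).Nonempty, EMetric.diam (t n) := by
            rw [iSup_pos htne, hδ_def, ENNReal.ofReal_toReal hfin]
  calc volume ((AffineMap.homothety x (1+p) : ℂ →ᵃ[ℝ] ℂ) '' K \ K)
      ≤ volume (⋃ n, T n) := measure_mono hsub
    _ ≤ ∑' n, volume (T n) := measure_iUnion_le T
    _ ≤ ∑' n, ENNReal.ofReal C * ⨆ _ : (t n).Nonempty, EMetric.diam (t n) :=
        ENNReal.tsum_le_tsum hpiece
    _ = ENNReal.ofReal C * ∑' n, ⨆ _ : (t n).Nonempty, EMetric.diam (t n) :=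
        ENNReal.tsum_mul_left


open Real MeasureTheory
open scoped ENNReal

/-- Let `K` be a compact convex planar region with boundary `γ = frontier K` of positive
length `ℓ`, let `x` be an interior point, and suppose `γ` is a critical point of
`F = length − ∫∫ B` under homothety about `x` (the derivative at `p = 0` of `F` applied to
the dilation by factor `1 + p` vanishes).  If `0 < B ≤ Bmax` and `dmax` is the maximal
distance from `x` to `γ`, then `ℓ ≤ ℓ·dmax·Bmax`, hence `dmax ≥ 1/Bmax`. -/
theorem dmax_ge_of_homothety_critical (K : Set ℂ) (hcomp : IsCompact K)
    (hconv : Convex ℝ K) (x : ℂ) (hx : x ∈ interior K)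
    (B : ℂ → ℝ) (hBc : Continuous B) (Bmax : ℝ)
    (hB : ∀ p, 0 < B p ∧ B p ≤ Bmax)
    (ℓ dmax : ℝ) (hℓ : ℓ = (μH[1] (frontier K)).toReal) (hℓpos : 0 < ℓ)
    (hd : IsGreatest ((fun y => dist x y) '' frontier K) dmax)
    (hcrit : HasDerivAt
      (fun p : ℝ => (1 + p) * ℓ - ∫ y in (AffineMap.homothety x (1 + p) : ℂ →ᵃ[ℝ] ℂ) '' K, B y)
      0 0) :
    ℓ ≤ ℓ * dmax * Bmax ∧ 1 / Bmax ≤ dmax := by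
  have hxK : x ∈ K := interior_subset hx
  have hK : IsClosed K := hcomp.isClosed
  obtain ⟨w₁, hw₁f, hw₁d⟩ := hd.1
  have hD : ∀ w ∈ frontier K, dist x w ≤ dmax := fun w hw => hd.2 ⟨w, hw, rfl⟩
  have hxfr : x ∉ frontier K := by
    rw [hK.frontier_eq]; exact fun h => h.2 hx
  have hdmax_pos : 0 < dmax := by
    rw [← hw₁d, dist_pos]; exact fun h => hxfr (h ▸ hw₁f)
  have hBmax_pos : 0 < Bmax := lt_of_lt_of_le (hB 0).1 (hB 0).2
  set g : ℝ → ℝ :=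
    fun p => ∫ y in (AffineMap.homothety x (1+p) : ℂ →ᵃ[ℝ] ℂ) '' K, B y with hg_def
  have hgd : HasDerivAt g ℓ 0 := by
    have h1 : HasDerivAt (fun p : ℝ => (1+p)*ℓ) ℓ 0 := by
      simpa using ((hasDerivAt_id (0:ℝ)).const_add 1).mul_const ℓ
    have h2 := h1.sub hcrit
    have h3 : (fun p : ℝ => (1+p)*ℓ - ((1 + p) * ℓ -
        ∫ y in (AffineMap.homothety x (1 + p) : ℂ →ᵃ[ℝ] ℂ) '' K, B y)) = g := by
      funext q; rw [hg_def]; ring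
    simp only [Pi.sub_def] at h2
    rw [h3, sub_zero] at h2
    exact h2
  have hg0 : g 0 = ∫ y in K, B y := by
    have h4 : ((AffineMap.homothety x (1+(0:ℝ)) : ℂ →ᵃ[ℝ] ℂ)) '' K = K := by
      norm_num [AffineMap.homothety_one]
    show (∫ y in (AffineMap.homothety x (1+(0:ℝ)) : ℂ →ᵃ[ℝ] ℂ) '' K, B y) = _
    rw [h4]
  have hμfin : μH[1] (frontier K) ≠ ⊤ := by
    intro h
    rw [h] at hℓ
    simp at hℓ
    exact absurd hℓ (ne_of_gt hℓpos)
  have key : ∀ ε, 0 < ε → ℓ ≤ Bmax * dmax * (ℓ + ε) := by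
    intro ε hε
    have hℓ0 : 0 ≤ ℓ := hℓpos.le
    have hμlt : μH[1] (frontier K) < ENNReal.ofReal (ℓ + ε) := by
      rw [← ENNReal.ofReal_toReal hμfin, ← hℓ]
      exact (ENNReal.ofReal_lt_ofReal_iff (by linarith)).2 (by linarith)
    have hcover : ∀ p : ℝ, 0 < p → ∃ t : ℕ → Set ℂ,
        (frontier K ⊆ ⋃ n, t n) ∧ (∀ n, EMetric.diam (t n) ≤ ENNReal.ofReal (p*p)) ∧
        (∑' n, ⨆ _ : (t n).Nonempty, EMetric.diam (t n)) ≤ ENNReal.ofReal (ℓ + ε) := by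
      intro p hp
      have h1 : (⨅ (t : ℕ → Set ℂ) (_ : frontier K ⊆ ⋃ n, t n)
          (_ : ∀ n, EMetric.diam (t n) ≤ ENNReal.ofReal (p*p)),
          ∑' n, ⨆ _ : (t n).Nonempty, EMetric.diam (t n) ^ (1:ℝ)) ≤ μH[1] (frontier K) := by
        rw [Measure.hausdorffMeasure_apply]
        exact le_iSup₂ (f := fun r (_ : 0 < r) => ⨅ (t : ℕ → Set ℂ)
          (_ : frontier K ⊆ ⋃ n, t n) (_ : ∀ n, EMetric.diam (t n) ≤ r),
          ∑' n, ⨆ _ : (t n).Nonempty, EMetric.diam (t n) ^ (1:ℝ))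
          (ENNReal.ofReal (p*p)) (ENNReal.ofReal_pos.2 (by positivity))
      have h2 := lt_of_le_of_lt h1 hμlt
      simp only [ENNReal.rpow_one] at h2
      simp only [iInf_lt_iff] at h2
      obtain ⟨t, hcov, hmesh, hsum⟩ := h2
      exact ⟨t, hcov, hmesh, hsum.le⟩
    set h : ℝ → ℝ := fun p => Bmax * ((dmax + 2*(1+p)*p) * (1+p)) * (ℓ + ε) with hh_def
    have hslope : ∀ p : ℝ, 0 < p → slope g 0 p ≤ h p := by
      intro p hp
      have hp0 : (0:ℝ) ≤ p := hp.le
      obtain ⟨t, hcov, hmesh, hsum⟩ := hcover p hp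
      have hIm : IsCompact ((AffineMap.homothety x (1+p) : ℂ →ᵃ[ℝ] ℂ) '' K) :=
        hcomp.image (AffineMap.homothety_continuous x (1+p))
      have hKsub : K ⊆ (AffineMap.homothety x (1+p) : ℂ →ᵃ[ℝ] ℂ) '' K :=
        subset_homothety_image K hconv x hxK p hp0
      have hint : IntegrableOn B ((AffineMap.homothety x (1+p) : ℂ →ᵃ[ℝ] ℂ) '' K) :=
        ContinuousOn.integrableOn_compact hIm hBc.continuousOn
      have hdiffeq : (∫ y in ((AffineMap.homothety x (1+p) : ℂ →ᵃ[ℝ] ℂ) '' K) \ K, B y)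
          = g p - g 0 := by
        rw [hg0]
        exact integral_diff hK.measurableSet hint hKsub
      have hvolA := annulus_vol_le K hK x hx dmax hD t hcov (p*p) (by positivity) hmesh p hp0
      have hvolA2 : volume (((AffineMap.homothety x (1+p) : ℂ →ᵃ[ℝ] ℂ) '' K) \ K) ≤
          ENNReal.ofReal (((p*dmax + 2*(1+p)*(p*p)) * (1+p)) * (ℓ + ε)) := by
        refine le_trans hvolA ?_
        calc ENNReal.ofReal ((p*dmax + 2*(1+p)*(p*p)) * (1+p)) *
              ∑' n, ⨆ _ : (t n).Nonempty, EMetric.diam (t n)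
            ≤ ENNReal.ofReal ((p*dmax + 2*(1+p)*(p*p)) * (1+p)) * ENNReal.ofReal (ℓ + ε) :=
              mul_le_mul_right hsum _
          _ = ENNReal.ofReal (((p*dmax + 2*(1+p)*(p*p)) * (1+p)) * (ℓ + ε)) :=
              (ENNReal.ofReal_mul (by nlinarith)).symm
      have hvollt : volume (((AffineMap.homothety x (1+p) : ℂ →ᵃ[ℝ] ℂ) '' K) \ K) < ⊤ :=
        lt_of_le_of_lt (measure_mono Set.diff_subset) hIm.measure_lt_top
      have hbound : g p - g 0 ≤ Bmax *
          (volume (((AffineMap.homothety x (1+p) : ℂ →ᵃ[ℝ] ℂ) '' K) \ K)).toReal := by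
        rw [← hdiffeq]
        calc ∫ y in ((AffineMap.homothety x (1+p) : ℂ →ᵃ[ℝ] ℂ) '' K) \ K, B y
            ≤ ‖∫ y in ((AffineMap.homothety x (1+p) : ℂ →ᵃ[ℝ] ℂ) '' K) \ K, B y‖ :=
              le_abs_self _
          _ ≤ Bmax * (volume (((AffineMap.homothety x (1+p) : ℂ →ᵃ[ℝ] ℂ) '' K) \ K)).toReal :=
              norm_setIntegral_le_of_norm_le_const hvollt
                (fun y _ => by
                  rw [Real.norm_eq_abs, abs_of_pos (hB y).1]
                  exact (hB y).2)
      have htoReal : (volume (((AffineMap.homothety x (1+p) : ℂ →ᵃ[ℝ] ℂ) '' K) \ K)).toReal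
          ≤ ((p*dmax + 2*(1+p)*(p*p)) * (1+p)) * (ℓ + ε) :=
        ENNReal.toReal_le_of_le_ofReal
          (mul_nonneg (mul_nonneg (by nlinarith) (by linarith)) (by linarith)) hvolA2
      have hgp : g p - g 0 ≤ p * h p := by
        rw [hh_def]
        calc g p - g 0
            ≤ Bmax * (volume (((AffineMap.homothety x (1+p) : ℂ →ᵃ[ℝ] ℂ) '' K) \ K)).toReal :=
              hbound
          _ ≤ Bmax * (((p*dmax + 2*(1+p)*(p*p)) * (1+p)) * (ℓ + ε)) :=
              mul_le_mul_of_nonneg_left htoReal hBmax_pos.le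
          _ = p * (Bmax * ((dmax + 2*(1+p)*p) * (1+p)) * (ℓ + ε)) := by ring
      rw [slope_def_field, sub_zero, div_le_iff₀ hp]
      calc g p - g 0 ≤ p * h p := hgp
        _ = h p * p := by ring
    have htend1 : Filter.Tendsto (slope g 0) (nhdsWithin 0 (Set.Ioi 0)) (nhds ℓ) :=
      (hasDerivAt_iff_tendsto_slope.1 hgd).mono_left
        (nhdsWithin_mono 0 (fun y hy => Set.mem_compl_singleton_iff.2 (ne_of_gt hy)))
    have hcont : Filter.Tendsto h (nhdsWithin 0 (Set.Ioi 0)) (nhds (Bmax * dmax * (ℓ + ε))) := by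
      have hc : Continuous h := by rw [hh_def]; fun_prop
      have h0 : h 0 = Bmax * dmax * (ℓ + ε) := by rw [hh_def]; norm_num
      have h5 := hc.tendsto 0
      rw [h0] at h5
      exact h5.mono_left nhdsWithin_le_nhds
    refine le_of_tendsto_of_tendsto htend1 hcont ?_
    filter_upwards [self_mem_nhdsWithin] with q hq
    exact hslope q hq
  have hfinal : ℓ ≤ Bmax * dmax * ℓ := by
    apply le_of_forall_pos_le_add
    intro ε' hε'
    have hc : 0 < Bmax * dmax := mul_pos hBmax_pos hdmax_pos
    have h6 := key (ε' / (Bmax * dmax)) (by positivity)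
    calc ℓ ≤ Bmax * dmax * (ℓ + ε' / (Bmax * dmax)) := h6
      _ = Bmax * dmax * ℓ + ε' := by field_simp
  constructor
  · calc ℓ ≤ Bmax * dmax * ℓ := hfinal
      _ = ℓ * dmax * Bmax := by ring
  · have h1 : 1 ≤ dmax * Bmax := by nlinarith
    rw [div_le_iff₀ hBmax_pos]
    linarith
end
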